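/- arXiv:2202.11031 — 6 statements merged into one kernel-verified Lean document; each statement's English description precedes it below -/
import Mathlib

section
/- Suppose (i) for every θ ∈ Θ the map x ↦ g(x,θ) is continuous and increasing on ℝ; (ii) Lebesgue measure μ on ℝ is absolutely continuous with respect to ν; (iii) Θ is compact; and (iv) for every bounded continuous function f : ℝ → ℝ, the map θ ↦ f(g(·,θ)) is continuous from Θ into L²(ν), i.e. for every θ₀ ∈ Θ and every ε > 0 there exists δ > 0 such that ∫_ℝ (f(g(x,θ)) − f(g(x,θ₀)))² dν(x) < ε whenever θ ∈ Θ and ‖θ − θ₀‖₂ < δ. Then there exists θ ∈ Θ with F(x) = G(g(x,θ)) for all x ∈ ℝ if and only if inf_{θ∈Θ} ∫_ℝ (F(x) − G(g(x,θ)))² dν(x) = 0. -/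
open MeasureTheory Filter Topology

set_option maxHeartbeats 1600000 in
/-- Proposition 1 of the paper: equivalent characterization of the
null hypothesis that `F = G ∘ g(·,θ)` for some nuisance parameter `θ ∈ Θ`. -/
theorem stmt_0
    (d : ℕ) (hd : 1 ≤ d)
    (Θ : Set (EuclideanSpace ℝ (Fin d))) (hΘne : Θ.Nonempty)
    (g : ℝ → EuclideanSpace ℝ (Fin d) → ℝ)
    (ν : Measure ℝ) [IsProbabilityMeasure ν]
    (F G : ℝ → ℝ)
    -- F is a continuous CDF
    (hFcont : Continuous F) (hFmono : Monotone F)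
    (hFbot : Tendsto F atBot (𝓝 0)) (hFtop : Tendsto F atTop (𝓝 1))
    -- G is a continuous CDF
    (hGcont : Continuous G) (hGmono : Monotone G)
    (hGbot : Tendsto G atBot (𝓝 0)) (hGtop : Tendsto G atTop (𝓝 1))
    -- (i) for every θ ∈ Θ, x ↦ g(x,θ) is continuous and increasing
    (hg_cont : ∀ θ ∈ Θ, Continuous fun x => g x θ)
    (hg_mono : ∀ θ ∈ Θ, StrictMono fun x => g x θ)
    -- (ii) Lebesgue measure is absolutely continuous with respect to ν
    (hac : (volume : Measure ℝ) ≪ ν)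
    -- (iii) Θ is compact
    (hΘcomp : IsCompact Θ)
    -- (iv) for every bounded continuous f, θ ↦ f(g(·,θ)) is continuous from Θ to L²(ν)
    (hL2cont : ∀ f : ℝ → ℝ, Continuous f → (∃ M, ∀ x, |f x| ≤ M) →
      ∀ θ₀ ∈ Θ, ∀ ε > 0, ∃ δ > 0, ∀ θ ∈ Θ, ‖θ - θ₀‖ < δ →
        ∫ x, (f (g x θ) - f (g x θ₀)) ^ 2 ∂ν < ε) :
    (∃ θ ∈ Θ, ∀ x : ℝ, F x = G (g x θ)) ↔
      sInf ((fun θ => ∫ x, (F x - G (g x θ)) ^ 2 ∂ν) '' Θ) = 0 := by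
  have hF0 : ∀ x, 0 ≤ F x := fun x => hFmono.le_of_tendsto hFbot x
  have hF1 : ∀ x, F x ≤ 1 := fun x => hFmono.ge_of_tendsto hFtop x
  have hG0 : ∀ x, 0 ≤ G x := fun x => hGmono.le_of_tendsto hGbot x
  have hG1 : ∀ x, G x ≤ 1 := fun x => hGmono.ge_of_tendsto hGtop x
  set h : EuclideanSpace ℝ (Fin d) → ℝ := fun θ => ∫ x, (F x - G (g x θ)) ^ 2 ∂ν with hh
  have hnn : ∀ θ, 0 ≤ h θ := fun θ => integral_nonneg fun x => sq_nonneg _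
  have hbdd : BddBelow ((fun θ => ∫ x, (F x - G (g x θ)) ^ 2 ∂ν) '' Θ) := by
    refine ⟨0, ?_⟩
    rintro y ⟨θ', hθ', rfl⟩
    exact hnn θ'
  have hint : ∀ θ ∈ Θ, Integrable (fun x => (F x - G (g x θ)) ^ 2) ν := by
    intro θ hθ
    refine ⟨((hFcont.sub (hGcont.comp (hg_cont θ hθ))).pow 2).aestronglyMeasurable,
      HasFiniteIntegral.of_bounded (C := 4) (ae_of_all _ fun x => ?_)⟩
    have h1 := hF0 x; have h2 := hF1 x
    have h3 := hG0 (g x θ); have h4 := hG1 (g x θ)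
    rw [Real.norm_eq_abs, abs_of_nonneg (sq_nonneg _)]
    nlinarith
  constructor
  · rintro ⟨θ, hθ, hFG⟩
    have h0 : h θ = 0 := by simp [hh, hFG]
    refine le_antisymm ?_ (le_csInf (hΘne.image _) ?_)
    · rw [← h0]; exact csInf_le hbdd ⟨θ, hθ, rfl⟩
    · rintro y ⟨θ', hθ', rfl⟩; exact hnn θ'
  · intro hinf
    have hcont : ContinuousOn h Θ := by
      rw [Metric.continuousOn_iff]
      intro θ₀ hθ₀ ε hε
      set c := ε / 8 with hc
      have hc0 : 0 < c := by positivity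
      obtain ⟨δ, hδ0, hδ⟩ := hL2cont G hGcont
        ⟨1, fun x => abs_le.2 ⟨by linarith [hG0 x], hG1 x⟩⟩ θ₀ hθ₀ (c ^ 2) (by positivity)
      refine ⟨δ, hδ0, fun θ hθ hdist => ?_⟩
      have key : ∫ x, (G (g x θ) - G (g x θ₀)) ^ 2 ∂ν < c ^ 2 :=
        hδ θ hθ (by rwa [← dist_eq_norm])
      have hq : Integrable (fun x => (G (g x θ) - G (g x θ₀)) ^ 2) ν := by
        refine ⟨(((hGcont.comp (hg_cont θ hθ)).sub
            (hGcont.comp (hg_cont θ₀ hθ₀))).pow 2).aestronglyMeasurable,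
          HasFiniteIntegral.of_bounded (C := 4) (ae_of_all _ fun x => ?_)⟩
        have h3 := hG0 (g x θ); have h4 := hG1 (g x θ)
        have h5 := hG0 (g x θ₀); have h6 := hG1 (g x θ₀)
        rw [Real.norm_eq_abs, abs_of_nonneg (sq_nonneg _)]
        nlinarith
      have hw := hint θ hθ; have hw0 := hint θ₀ hθ₀
      have h1 : h θ - h θ₀ =
          ∫ x, ((F x - G (g x θ)) ^ 2 - (F x - G (g x θ₀)) ^ 2) ∂ν :=
        (integral_sub hw hw0).symm
      have h2 : |h θ - h θ₀| ≤
          ∫ x, |(F x - G (g x θ)) ^ 2 - (F x - G (g x θ₀)) ^ 2| ∂ν := by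
        rw [h1]
        simpa [Real.norm_eq_abs] using
          norm_integral_le_integral_norm
            (fun x => (F x - G (g x θ)) ^ 2 - (F x - G (g x θ₀)) ^ 2) (μ := ν)
      have h3 : ∫ x, |(F x - G (g x θ)) ^ 2 - (F x - G (g x θ₀)) ^ 2| ∂ν ≤
          ∫ x, ((2 / c) * (G (g x θ) - G (g x θ₀)) ^ 2 + 2 * c) ∂ν := by
        refine integral_mono (hw.sub hw0).abs ((hq.const_mul _).add (integrable_const _)) ?_
        intro x
        set s := F x; set a := G (g x θ); set b := G (g x θ₀)
        have hs0 := hF0 x; have hs1 := hF1 x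
        have ha0 := hG0 (g x θ); have ha1 := hG1 (g x θ)
        have hb0 := hG0 (g x θ₀); have hb1 := hG1 (g x θ₀)
        have key2 : c * |(s - a) ^ 2 - (s - b) ^ 2| ≤ 2 * (a - b) ^ 2 + 2 * c ^ 2 := by
          rcases abs_cases ((s - a) ^ 2 - (s - b) ^ 2) with ⟨he, _⟩ | ⟨he, _⟩ <;>
            rw [he] <;>
            nlinarith [sq_nonneg (a - b - c), sq_nonneg (a - b + c), sq_nonneg (a + b - 2 * s),
              mul_nonneg hc0.le (sq_nonneg (a - b)), sq_nonneg (a - b)]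
        have h4 : |(s - a) ^ 2 - (s - b) ^ 2| ≤ (2 * (a - b) ^ 2 + 2 * c ^ 2) / c :=
          (le_div_iff₀ hc0).2 (by linarith)
        calc |(s - a) ^ 2 - (s - b) ^ 2| ≤ (2 * (a - b) ^ 2 + 2 * c ^ 2) / c := h4
          _ = (2 / c) * (a - b) ^ 2 + 2 * c := by field_simp
      have h5 : ∫ x, ((2 / c) * (G (g x θ) - G (g x θ₀)) ^ 2 + 2 * c) ∂ν =
          (2 / c) * ∫ x, (G (g x θ) - G (g x θ₀)) ^ 2 ∂ν + 2 * c := by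
        rw [integral_add (hq.const_mul _) (integrable_const _), integral_const_mul,
          integral_const]
        simp
      have h6 : (2 / c) * ∫ x, (G (g x θ) - G (g x θ₀)) ^ 2 ∂ν < (2 / c) * c ^ 2 :=
        mul_lt_mul_of_pos_left key (by positivity)
      have h7 : (2 / c) * c ^ 2 + 2 * c = ε / 2 := by
        field_simp [hc]; ring
      rw [Real.dist_eq]
      calc |h θ - h θ₀| ≤ ∫ x, ((2 / c) * (G (g x θ) - G (g x θ₀)) ^ 2 + 2 * c) ∂ν :=
            h2.trans h3
        _ = (2 / c) * ∫ x, (G (g x θ) - G (g x θ₀)) ^ 2 ∂ν + 2 * c := h5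
        _ < (2 / c) * c ^ 2 + 2 * c := by linarith
        _ = ε / 2 := h7
        _ < ε := by linarith
    obtain ⟨θ, hθ, hmin⟩ := hΘcomp.exists_isMinOn hΘne hcont
    have hθ0 : h θ = 0 := by
      refine le_antisymm ?_ (hnn θ)
      rw [← hinf]
      refine le_csInf (hΘne.image _) ?_
      rintro y ⟨θ', hθ', rfl⟩
      exact hmin hθ'
    have hae : (fun x => (F x - G (g x θ)) ^ 2) =ᵐ[ν] 0 :=
      (integral_eq_zero_iff_of_nonneg (fun x => sq_nonneg _) (hint θ hθ)).1 hθ0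
    have hae2 : F =ᵐ[ν] fun x => G (g x θ) := by
      filter_upwards [hae] with x hx
      simp only [Pi.zero_apply] at hx
      have h9 : F x - G (g x θ) = 0 := by
        have h10 : (F x - G (g x θ)) ^ 2 = 0 := hx
        exact sq_eq_zero_iff.mp h10
      linarith
    have haev : F =ᵐ[volume] fun x => G (g x θ) := hae2.filter_mono hac.ae_le
    have hFeq := (hFcont.ae_eq_iff_eq volume (hGcont.comp (hg_cont θ hθ))).1 haev
    exact ⟨θ, hθ, fun x => congrFun hFeq x⟩
end

section
/- Let F, G₁, …, G_K be continuous cumulative distribution functions on ℝ. Suppose that for every k ∈ {1,…,K}: (i) for every θ_k ∈ Θ_k the map x ↦ g_k(x,θ_k) is continuous and increasing; (ii) Lebesgue measure μ is absolutely continuous with respect to ν; (iii) Θ_k is compact; and (iv) for every bounded continuous f : ℝ → ℝ, the map θ_k ↦ f(g_k(·,θ_k)) is continuous from Θ_k into L²(ν). Then there exists (θ₁,…,θ_K) ∈ Θ₁ × ⋯ × Θ_K with F(x) = G_k(g_k(x,θ_k)) for all x ∈ ℝ and all k ∈ {1,…,K} if and only if inf_{(θ₁,…,θ_K)∈Θ₁×⋯×Θ_K}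 ∫_ℝ ∑_{k=1}^K (F(x) − G_k(g_k(x,θ_k)))² dν(x) = 0. -/
open MeasureTheory Filter Topology

/-- Bounds for a continuous CDF: its values lie in `[0,1]`. -/
lemma cdf_bounds_aux {F : ℝ → ℝ} (hm : Monotone F)
    (hb : Tendsto F atBot (𝓝 0)) (ht : Tendsto F atTop (𝓝 1)) (x : ℝ) :
    0 ≤ F x ∧ F x ≤ 1 := by
  constructor
  · exact le_of_tendsto hb ((eventually_le_atBot x).mono fun y hy => hm hy)
  · exact ge_of_tendsto ht ((eventually_ge_atTop x).mono fun y hy => hm hy)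

/-- A continuous bounded function is integrable w.r.t. a probability measure. -/
lemma integrable_of_bounded_cont {p : ℝ → ℝ} {C : ℝ} (hp : Continuous p)
    (hC : ∀ x, |p x| ≤ C) (ν : Measure ℝ) [IsProbabilityMeasure ν] :
    Integrable p ν :=
  (integrable_const C).mono' hp.aestronglyMeasurable (ae_of_all _ fun x => hC x)

/-- Proposition 2 of the paper: equivalent characterization of the
null hypothesis for transformations on multiple CDFs. -/
theorem stmt_2
    (K : ℕ) (hK : 1 ≤ K)
    (dk : Fin K → ℕ)
    (Θ : ∀ k : Fin K, Set (EuclideanSpace ℝ (Fin (dk k))))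
    (hΘne : ∀ k, (Θ k).Nonempty)
    (g : ∀ k : Fin K, ℝ → EuclideanSpace ℝ (Fin (dk k)) → ℝ)
    (ν : Measure ℝ) [IsProbabilityMeasure ν]
    (F : ℝ → ℝ) (G : Fin K → ℝ → ℝ)
    -- F is a continuous CDF
    (hFcont : Continuous F) (hFmono : Monotone F)
    (hFbot : Tendsto F atBot (𝓝 0)) (hFtop : Tendsto F atTop (𝓝 1))
    -- each G k is a continuous CDF
    (hGcont : ∀ k, Continuous (G k)) (hGmono : ∀ k, Monotone (G k))
    (hGbot : ∀ k, Tendsto (G k) atBot (𝓝 0)) (hGtop : ∀ k, Tendsto (G k) atTop (𝓝 1))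
    -- (i) for every k and every θk ∈ Θ k, x ↦ g k x θk is continuous and increasing
    (hg_cont : ∀ k, ∀ θk ∈ Θ k, Continuous fun x => g k x θk)
    (hg_mono : ∀ k, ∀ θk ∈ Θ k, StrictMono fun x => g k x θk)
    -- (ii) Lebesgue measure is absolutely continuous with respect to ν
    (hac : (volume : Measure ℝ) ≪ ν)
    -- (iii) each Θ k is compact
    (hΘcomp : ∀ k, IsCompact (Θ k))
    -- (iv) for every bounded continuous f and every k, θk ↦ f(g k (·, θk)) is
    -- continuous from Θ k into L²(ν)
    (hL2cont : ∀ k, ∀ f : ℝ → ℝ, Continuous f → (∃ M, ∀ x, |f x| ≤ M) →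
      ∀ θk₀ ∈ Θ k, ∀ ε > 0, ∃ δ > 0, ∀ θk ∈ Θ k, ‖θk - θk₀‖ < δ →
        ∫ x, (f (g k x θk) - f (g k x θk₀)) ^ 2 ∂ν < ε) :
    (∃ θ : ∀ k : Fin K, EuclideanSpace ℝ (Fin (dk k)),
        (∀ k, θ k ∈ Θ k) ∧ ∀ k, ∀ x : ℝ, F x = G k (g k x (θ k))) ↔
      sInf ((fun θ : ∀ k : Fin K, EuclideanSpace ℝ (Fin (dk k)) =>
          ∫ x, ∑ k, (F x - G k (g k x (θ k))) ^ 2 ∂ν) ''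
        {θ | ∀ k, θ k ∈ Θ k}) = 0 := by
  -- Abbreviations
  set J : (∀ k : Fin K, EuclideanSpace ℝ (Fin (dk k))) → ℝ :=
    fun θ => ∫ x, ∑ k, (F x - G k (g k x (θ k))) ^ 2 ∂ν with hJdef
  have hF01 : ∀ x, 0 ≤ F x ∧ F x ≤ 1 := cdf_bounds_aux hFmono hFbot hFtop
  have hG01 : ∀ k y, 0 ≤ G k y ∧ G k y ≤ 1 :=
    fun k => cdf_bounds_aux (hGmono k) (hGbot k) (hGtop k)
  -- integrability of the objective integrand
  have hInt : ∀ θ : ∀ k : Fin K, EuclideanSpace ℝ (Fin (dk k)), (∀ k, θ k ∈ Θ k) →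
      Integrable (fun x => ∑ k, (F x - G k (g k x (θ k))) ^ 2) ν := by
    intro θ hθ
    apply integrable_of_bounded_cont (C := (K : ℝ))
    · exact continuous_finset_sum _ fun k _ =>
        (hFcont.sub ((hGcont k).comp (hg_cont k _ (hθ k)))).pow 2
    · intro x
      rw [abs_of_nonneg (Finset.sum_nonneg fun k _ => sq_nonneg _)]
      calc ∑ k, (F x - G k (g k x (θ k))) ^ 2 ≤ ∑ _k : Fin K, (1 : ℝ) := by
            refine Finset.sum_le_sum fun k _ => ?_
            have h1 := hF01 x
            have h2 := hG01 k (g k x (θ k))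
            nlinarith [h1.1, h1.2, h2.1, h2.2]
        _ = (K : ℝ) := by simp
  have hJnonneg : ∀ θ, 0 ≤ J θ :=
    fun θ => integral_nonneg fun x => Finset.sum_nonneg fun k _ => sq_nonneg _
  have hne : ((fun θ : ∀ k : Fin K, EuclideanSpace ℝ (Fin (dk k)) => J θ) ''
      {θ | ∀ k, θ k ∈ Θ k}).Nonempty := by
    refine ⟨J fun k => (hΘne k).some, ⟨fun k => (hΘne k).some, fun k => (hΘne k).some_mem, rfl⟩⟩
  have hbdd : BddBelow ((fun θ : ∀ k : Fin K, EuclideanSpace ℝ (Fin (dk k)) => J θ) ''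
      {θ | ∀ k, θ k ∈ Θ k}) := by
    refine ⟨0, ?_⟩
    rintro y ⟨θ, _, rfl⟩
    exact hJnonneg θ
  constructor
  · -- forward direction
    rintro ⟨θ, hθS, hθeq⟩
    have hJ0 : J θ = 0 := by
      have : (fun x => ∑ k, (F x - G k (g k x (θ k))) ^ 2) = fun _ => (0 : ℝ) := by
        funext x
        exact Finset.sum_eq_zero fun k _ => by rw [hθeq k x]; ring
      rw [hJdef]; simp only [this, integral_zero]
    refine le_antisymm ?_ (le_csInf hne ?_)
    · rw [← hJ0]
      exact csInf_le hbdd ⟨θ, hθS, rfl⟩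
    · rintro y ⟨θ', _, rfl⟩
      exact hJnonneg θ'
  · -- backward direction
    intro hinf
    -- a minimizing sequence
    have hseq : ∀ n : ℕ, ∃ θ : ∀ k : Fin K, EuclideanSpace ℝ (Fin (dk k)),
        (∀ k, θ k ∈ Θ k) ∧ J θ < 1 / (n + 1) := by
      intro n
      have hlt : sInf ((fun θ : ∀ k : Fin K, EuclideanSpace ℝ (Fin (dk k)) => J θ) ''
          {θ | ∀ k, θ k ∈ Θ k}) < 1 / (n + 1) := by
        rw [hinf]; positivity
      obtain ⟨y, ⟨θ, hθ, rfl⟩, hy⟩ := exists_lt_of_csInf_lt hne hlt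
      exact ⟨θ, hθ, hy⟩
    choose u hu hJu using hseq
    have hSc : IsCompact (Set.univ.pi Θ) := isCompact_univ_pi hΘcomp
    obtain ⟨a, haS, φ, hφmono, hφtend⟩ :=
      hSc.tendsto_subseq (x := u) fun n => Set.mem_univ_pi.2 fun k => hu n k
    have haΘ : ∀ k, a k ∈ Θ k := fun k => haS k (Set.mem_univ k)
    -- J a ≤ ε for every ε > 0
    have hJa_le : ∀ ε > (0 : ℝ), J a ≤ ε := by
      intro ε hε
      have hεK : (0 : ℝ) < ε / (4 * K) := by positivity
      have hδ : ∀ k, ∃ δ > 0, ∀ θk ∈ Θ k, ‖θk - a k‖ < δ →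
          ∫ x, (G k (g k x θk) - G k (g k x (a k))) ^ 2 ∂ν < ε / (4 * K) := by
        intro k
        refine hL2cont k (G k) (hGcont k) ⟨1, fun y => abs_le.2 ⟨?_, (hG01 k y).2⟩⟩
          (a k) (haΘ k) _ hεK
        linarith [(hG01 k y).1]
      choose δ hδpos hδ using hδ
      -- eventually the subsequence is δ-close in every coordinate
      have E1 : ∀ᶠ j in atTop, ∀ k, ‖u (φ j) k - a k‖ < δ k := by
        rw [eventually_all]
        intro k
        have hck : Tendsto (fun j => u (φ j) k) atTop (𝓝 (a k)) :=
          ((continuous_apply k).tendsto a).comp hφtend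
        have := Metric.tendsto_nhds.mp hck (δ k) (hδpos k)
        filter_upwards [this] with j hj
        rwa [dist_eq_norm] at hj
      -- eventually J of the subsequence is < ε/4
      have E2 : ∀ᶠ j in atTop, J (u (φ j)) < ε / 4 := by
        have ht : Tendsto (fun j : ℕ => 1 / ((j : ℝ) + 1)) atTop (𝓝 0) :=
          tendsto_one_div_add_atTop_nhds_zero_nat
        filter_upwards [ht.eventually_lt_const (by positivity : (0:ℝ) < ε / 4)] with j hj
        refine lt_of_lt_of_le (hJu (φ j)) (le_trans ?_ hj.le)
        have hle : (j : ℝ) + 1 ≤ (φ j : ℝ) + 1 := by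
          have hj' : j ≤ φ j := hφmono.le_apply
          push_cast
          exact_mod_cast add_le_add_left (Nat.cast_le.2 hj') 1
        exact one_div_le_one_div_of_le (by positivity) hle
      obtain ⟨j, hj1, hj2⟩ := (E1.and E2).exists
      set b := u (φ j) with hbdef
      have hbΘ : ∀ k, b k ∈ Θ k := hu (φ j)
      -- integrability pieces
      have hIntB : ∀ k : Fin K,
          Integrable (fun x => (G k (g k x (b k)) - G k (g k x (a k))) ^ 2) ν := by
        intro k
        apply integrable_of_bounded_cont (C := (1 : ℝ))
        · exact ((((hGcont k).comp (hg_cont k _ (hbΘ k)))).sub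
            ((hGcont k).comp (hg_cont k _ (haΘ k)))).pow 2
        · intro x
          rw [abs_of_nonneg (sq_nonneg _)]
          have h1 := hG01 k (g k x (b k))
          have h2 := hG01 k (g k x (a k))
          nlinarith [h1.1, h1.2, h2.1, h2.2]
      have hIntA : ∀ k : Fin K,
          Integrable (fun x => (F x - G k (g k x (b k))) ^ 2) ν := by
        intro k
        apply integrable_of_bounded_cont (C := (1 : ℝ))
        · exact (hFcont.sub ((hGcont k).comp (hg_cont k _ (hbΘ k)))).pow 2
        · intro x
          rw [abs_of_nonneg (sq_nonneg _)]
          have h1 := hF01 x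
          have h2 := hG01 k (g k x (b k))
          nlinarith [h1.1, h1.2, h2.1, h2.2]
      -- the key comparison
      have hkey : J a ≤ 2 * J b + 2 * ∑ k, ∫ x, (G k (g k x (b k)) - G k (g k x (a k))) ^ 2 ∂ν := by
        have hmono : J a ≤ ∫ x, ∑ k, (2 * (F x - G k (g k x (b k))) ^ 2 +
            2 * (G k (g k x (b k)) - G k (g k x (a k))) ^ 2) ∂ν := by
          refine integral_mono (hInt a haΘ) ?_ ?_
          · apply integrable_finset_sum
            intro k _
            exact (((hIntA k).const_mul 2)).add ((hIntB k).const_mul 2)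
          · intro x
            refine Finset.sum_le_sum fun k _ => ?_
            nlinarith [sq_nonneg ((F x - G k (g k x (b k))) - (G k (g k x (b k)) - G k (g k x (a k))))]
        calc J a ≤ _ := hmono
          _ = ∑ k, (2 * ∫ x, (F x - G k (g k x (b k))) ^ 2 ∂ν +
              2 * ∫ x, (G k (g k x (b k)) - G k (g k x (a k))) ^ 2 ∂ν) := by
            rw [integral_finset_sum (μ := ν) Finset.univ
              (f := fun k x => 2 * (F x - G k (g k x (b k))) ^ 2 +
                2 * (G k (g k x (b k)) - G k (g k x (a k))) ^ 2)
              (fun k _ => by exact (((hIntA k).const_mul 2)).add ((hIntB k).const_mul 2))]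
            refine Finset.sum_congr rfl fun k _ => ?_
            rw [integral_add ((hIntA k).const_mul 2) ((hIntB k).const_mul 2),
              integral_const_mul, integral_const_mul]
          _ = 2 * (∑ k, ∫ x, (F x - G k (g k x (b k))) ^ 2 ∂ν) +
              2 * ∑ k, ∫ x, (G k (g k x (b k)) - G k (g k x (a k))) ^ 2 ∂ν := by
            rw [Finset.sum_add_distrib, Finset.mul_sum, Finset.mul_sum]
          _ = 2 * J b + 2 * ∑ k, ∫ x, (G k (g k x (b k)) - G k (g k x (a k))) ^ 2 ∂ν := by
            simp only [hJdef]
            rw [integral_finset_sum _ fun k _ => hIntA k]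
      have hsum : ∑ k, ∫ x, (G k (g k x (b k)) - G k (g k x (a k))) ^ 2 ∂ν ≤ ε / 4 := by
        calc ∑ k, ∫ x, (G k (g k x (b k)) - G k (g k x (a k))) ^ 2 ∂ν
            ≤ ∑ _k : Fin K, ε / (4 * K) := by
              refine Finset.sum_le_sum fun k _ => ?_
              exact (hδ k (b k) (hbΘ k) (hj1 k)).le
          _ = K * (ε / (4 * K)) := by simp [Finset.sum_const, mul_comm]
          _ = ε / 4 := by
              field_simp
      linarith [hkey, hj2, hsum]
    have hJa0 : J a = 0 := le_antisymm
      (le_of_forall_pos_le_add fun ε hε => by simpa using hJa_le ε hε) (hJnonneg a)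
    -- from integral zero to a.e. zero to everywhere zero
    have hae : (fun x => ∑ k, (F x - G k (g k x (a k))) ^ 2) =ᵐ[ν] 0 :=
      (integral_eq_zero_iff_of_nonneg
        (fun x => Finset.sum_nonneg fun k _ => sq_nonneg _) (hInt a haΘ)).mp hJa0
    have hν0 : ν {x | (∑ k, (F x - G k (g k x (a k))) ^ 2) ≠ 0} = 0 := by
      have := hae
      rw [Filter.EventuallyEq, ae_iff] at this
      simpa using this
    have hμ0 : (volume : Measure ℝ) {x | (∑ k, (F x - G k (g k x (a k))) ^ 2) ≠ 0} = 0 :=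
      hac hν0
    have hopen : IsOpen {x : ℝ | (∑ k, (F x - G k (g k x (a k))) ^ 2) ≠ 0} := by
      refine isOpen_ne_fun ?_ continuous_const
      exact continuous_finset_sum _ fun k _ =>
        (hFcont.sub ((hGcont k).comp (hg_cont k _ (haΘ k)))).pow 2
    have hempty := hopen.eq_empty_of_measure_zero hμ0
    have hzero : ∀ x, ∑ k, (F x - G k (g k x (a k))) ^ 2 = 0 := by
      intro x
      by_contra hx
      exact absurd hempty (Set.nonempty_iff_ne_empty.mp ⟨x, hx⟩)
    refine ⟨a, haΘ, fun k x => ?_⟩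
    have := (Finset.sum_eq_zero_iff_of_nonneg fun k _ => sq_nonneg
      (F x - G k (g k x (a k)))).mp (hzero x) k (Finset.mem_univ k)
    have := pow_eq_zero_iff (n := 2) (by norm_num) |>.mp this
    linarith [this]
end

section
/- Let ν be a Borel probability measure on ℝ and Θ ⊆ ℝ^d nonempty and compact. Let φ, h : ℝ × Θ → ℝ be bounded functions that are L²(ν)-continuous in θ (for every θ₀ ∈ Θ and ε > 0 there is δ > 0 with ∫(ψ(x,θ) − ψ(x,θ₀))² dν(x) < ε whenever ‖θ − θ₀‖₂ < δ, for ψ = φ and ψ = h). Define L(ψ) = inf_{θ∈Θ} ∫_ℝ ψ(x,θ)² dν(x) and let Θ₀(φ) = argmin_{θ∈Θ} ∫_ℝ φ(x,θ)² dν(x), which is nonempty. Then for every sequence of positive reals t_n → 0 and every sequence of bounded functions h_n : ℝ × Θ → ℝ with ‖h_n − h‖∞ → 0, lim_{n→∞} ( L(φ + t_n h_n) − L(φ) )/t_n = 2 · inf_{θ∈Θ₀(φ)} ∫_ℝ φ(x,θ) h(x,θ) dν(x). -/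
open MeasureTheory Filter Topology

lemma aux_hadamard {E : Type*} [TopologicalSpace E] [T2Space E]
    (Θ Θ₀ : Set E) (hΘne : Θ.Nonempty) (hΘcomp : IsCompact Θ)
    (F D : E → ℝ) (hFcont : ContinuousOn F Θ) (hDcont : ContinuousOn D Θ)
    (hΘ₀ : ∀ θ, θ ∈ Θ₀ ↔ θ ∈ Θ ∧ ∀ ϑ ∈ Θ, F θ ≤ F ϑ)
    (t : ℕ → ℝ) (htpos : ∀ n, 0 < t n) (ht0 : Tendsto t atTop (𝓝 0))
    (R : ℕ → E → ℝ)
    (hRclose : ∀ ε > 0, ∃ N, ∀ n ≥ N, ∀ θ ∈ Θ, |R n θ - 2 * D θ| < ε) :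
    Θ₀.Nonempty ∧ Tendsto (fun n => (sInf ((fun θ => F θ + t n * R n θ) '' Θ) - sInf (F '' Θ)) / t n)
      atTop (𝓝 (2 * sInf (D '' Θ₀))) := by
  obtain ⟨θ0, hθ0Θ, hθ0⟩ := hΘcomp.exists_isMinOn hΘne hFcont
  have hθ0min : ∀ ϑ ∈ Θ, F θ0 ≤ F ϑ := fun ϑ hϑ => hθ0 hϑ
  have hθ0Θ₀ : θ0 ∈ Θ₀ := (hΘ₀ θ0).mpr ⟨hθ0Θ, hθ0min⟩
  have hΘ₀ne : Θ₀.Nonempty := ⟨θ0, hθ0Θ₀⟩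
  have hΘ₀sub : Θ₀ ⊆ Θ := fun θ hθ => ((hΘ₀ θ).mp hθ).1
  set L := sInf (F '' Θ) with hL
  have hbbF : BddBelow (F '' Θ) := by
    refine ⟨F θ0, ?_⟩; rintro y ⟨ϑ, hϑ, rfl⟩; exact hθ0min ϑ hϑ
  have hLle : ∀ θ ∈ Θ, L ≤ F θ := fun θ hθ => csInf_le hbbF ⟨θ, hθ, rfl⟩
  have hLF : ∀ θ ∈ Θ₀, F θ = L := by
    intro θ hθ
    obtain ⟨hθΘ, hmin⟩ := (hΘ₀ θ).mp hθ
    refine le_antisymm ?_ (hLle θ hθΘ)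
    refine le_csInf (hΘne.image F) ?_
    rintro b ⟨ϑ, hϑ, rfl⟩; exact hmin ϑ hϑ
  obtain ⟨θd, hθdΘ, hθd⟩ := hΘcomp.exists_isMinOn hΘne hDcont
  obtain ⟨θD, hθDΘ, hθD⟩ := hΘcomp.exists_isMaxOn hΘne hDcont
  set A := sInf (D '' Θ₀) with hA
  have hbbD : BddBelow (D '' Θ₀) := by
    refine ⟨D θd, ?_⟩; rintro y ⟨ϑ, hϑ, rfl⟩; exact hθd (hΘ₀sub hϑ)
  have hAle : ∀ θ ∈ Θ₀, A ≤ D θ := fun θ hθ => csInf_le hbbD ⟨θ, hθ, rfl⟩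
  have hDb : ∀ θ ∈ Θ, |D θ| ≤ max |D θd| |D θD| := by
    intro θ hθ
    have h1 : D θd ≤ D θ := hθd hθ
    have h2 : D θ ≤ D θD := hθD hθ
    have h3 := le_abs_self (D θD)
    have h4 := neg_abs_le (D θd)
    have h5 := le_max_left |D θd| |D θD|
    have h6 := le_max_right |D θd| |D θD|
    rw [abs_le]; constructor <;> linarith
  -- gap lemma
  have hgap : ∀ η > 0, ∃ ρ > 0, ∀ θ ∈ Θ, F θ < L + ρ → A - η < D θ := by
    intro η hη
    set K := {θ ∈ Θ | D θ ≤ A - η} with hK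
    by_cases hKne : K.Nonempty
    · have hKsub : K ⊆ Θ := fun θ hθ => hθ.1
      have hKcl : IsClosed K := by
        have hKeq : K = Θ ∩ D ⁻¹' (Set.Iic (A - η)) := by
          ext θ; simp [hK, Set.mem_sep_iff, Set.mem_preimage, Set.mem_Iic]
        rw [hKeq]
        exact hDcont.preimage_isClosed_of_isClosed hΘcomp.isClosed isClosed_Iic
      have hKcomp : IsCompact K := hΘcomp.of_isClosed_subset hKcl hKsub
      obtain ⟨θ', hθ'K, hθ'⟩ := hKcomp.exists_isMinOn hKne (hFcont.mono hKsub)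
      have hθ'Θ : θ' ∈ Θ := hKsub hθ'K
      have hLθ' : L < F θ' := by
        rcases lt_or_eq_of_le (hLle θ' hθ'Θ) with hlt | heq
        · exact hlt
        · exfalso
          have hθ'Θ₀ : θ' ∈ Θ₀ := by
            refine (hΘ₀ θ').mpr ⟨hθ'Θ, fun ϑ hϑ => ?_⟩
            rw [← heq]; exact hLle ϑ hϑ
          have h1 := hAle θ' hθ'Θ₀
          have h2 := hθ'K.2
          linarith
      refine ⟨F θ' - L, by linarith, fun θ hθΘ hFθ => ?_⟩
      by_contra hcon
      push_neg at hcon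
      have hθK : θ ∈ K := ⟨hθΘ, hcon⟩
      have hle : F θ' ≤ F θ := isMinOn_iff.mp hθ' θ hθK
      linarith
    · refine ⟨1, one_pos, fun θ hθΘ _ => ?_⟩
      by_contra hcon; push_neg at hcon
      exact hKne ⟨θ, hθΘ, hcon⟩
  refine ⟨hΘ₀ne, ?_⟩
  rw [Metric.tendsto_atTop]
  intro ε hε
  obtain ⟨θs, hθsΘ₀, hθs⟩ : ∃ θs ∈ Θ₀, D θs < A + ε / 8 := by
    obtain ⟨a, ⟨θs, hθs, rfl⟩, ha⟩ :=
      Real.lt_sInf_add_pos (hΘ₀ne.image D) (by linarith : (0:ℝ) < ε / 8)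
    exact ⟨θs, hθs, ha⟩
  have hθsΘ : θs ∈ Θ := hΘ₀sub hθsΘ₀
  obtain ⟨N₁, hN₁⟩ := hRclose (ε / 8) (by linarith)
  obtain ⟨N₂, hN₂⟩ := hRclose 1 one_pos
  set CR := 2 * max |D θd| |D θD| + 1 with hCR
  have hCR0 : 0 < CR := by
    have := abs_nonneg (D θd); have := le_max_left |D θd| |D θD|; rw [hCR]; linarith
  have hRB : ∀ n ≥ N₂, ∀ θ ∈ Θ, |R n θ| ≤ CR := by
    intro n hn θ hθ
    have h1 := hN₂ n hn θ hθ
    have h2 := hDb θ hθ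
    have h3 : |R n θ| ≤ |R n θ - 2 * D θ| + |2 * D θ| := by
      have := abs_add_le (R n θ - 2 * D θ) (2 * D θ); simpa using this
    have h4 : |2 * D θ| = 2 * |D θ| := by rw [abs_mul]; norm_num
    rw [hCR]; linarith
  have hA2 : 2 * A ≤ CR - 1 := by
    have h1 := hAle θ0 hθ0Θ₀
    have h2 := hDb θ0 hθ0Θ
    have h3 := le_abs_self (D θ0)
    rw [hCR]; linarith
  obtain ⟨ρ, hρ, hgapρ⟩ := hgap (ε / 8) (by linarith)
  have hden : (0:ℝ) < 2 * CR + ε := by linarith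
  obtain ⟨N₃, hN₃'⟩ := (Metric.tendsto_atTop.mp ht0) (ρ / (2 * CR + ε)) (div_pos hρ hden)
  have hN₃ : ∀ n ≥ N₃, t n < ρ / (2 * CR + ε) := by
    intro n hn
    have := hN₃' n hn
    rw [Real.dist_eq, sub_zero] at this
    exact lt_of_le_of_lt (le_abs_self _) this
  refine ⟨max N₁ (max N₂ N₃), fun n hnN => ?_⟩
  have hn1 : n ≥ N₁ := le_trans (le_max_left _ _) hnN
  have hn2 : n ≥ N₂ := le_trans (le_trans (le_max_left _ _) (le_max_right _ _)) hnN
  have hn3 : n ≥ N₃ := le_trans (le_trans (le_max_right _ _) (le_max_right _ _)) hnN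
  have htn := htpos n
  set Ln := sInf ((fun θ => F θ + t n * R n θ) '' Θ) with hLn
  have hbbG : BddBelow ((fun θ => F θ + t n * R n θ) '' Θ) := by
    refine ⟨L - t n * CR, ?_⟩
    rintro y ⟨θ, hθ, rfl⟩
    have h1 := hLle θ hθ
    have h2 := neg_le_of_abs_le (hRB n hn2 θ hθ)
    have h3 : t n * (-CR) ≤ t n * R n θ := mul_le_mul_of_nonneg_left h2 htn.le
    simp only
    nlinarith
  -- upper bound
  have hRs := hN₁ n hn1 θs hθsΘ
  have hup : Ln ≤ L + t n * (2 * A + ε / 4 + ε / 8) := by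
    have h1 : Ln ≤ F θs + t n * R n θs := csInf_le hbbG ⟨θs, hθsΘ, rfl⟩
    have h2 : R n θs < 2 * A + ε / 4 + ε / 8 := by
      have := abs_lt.mp hRs; linarith
    have h3 : t n * R n θs ≤ t n * (2 * A + ε / 4 + ε / 8) :=
      mul_le_mul_of_nonneg_left h2.le htn.le
    have h4 := hLF θs hθsΘ₀
    linarith
  -- near minimizer
  obtain ⟨θn, hθnΘ, han⟩ : ∃ θn ∈ Θ, F θn + t n * R n θn < Ln + t n * (ε / 8) := by
    obtain ⟨a, ⟨θn, hθn, rfl⟩, ha⟩ :=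
      Real.lt_sInf_add_pos (hΘne.image _) (mul_pos htn (by linarith : (0:ℝ) < ε / 8))
    exact ⟨θn, hθn, ha⟩
  have hRn := hN₁ n hn1 θn hθnΘ
  have hRBn := hRB n hn2 θn hθnΘ
  have hFθn : F θn < L + ρ := by
    have h1 : t n * (-CR) ≤ t n * R n θn :=
      mul_le_mul_of_nonneg_left (neg_le_of_abs_le hRBn) htn.le
    have h2 : t n * (2 * A + ε / 4 + ε / 8) + t n * (ε / 8) + t n * CR ≤ t n * (2 * CR + ε / 2 + ε / 4) := by
      have : (2 * A + ε / 4 + ε / 8) + ε / 8 + CR ≤ 2 * CR + ε / 2 + ε / 4 := by linarith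
      nlinarith
    have h3 : t n * (2 * CR + ε / 2 + ε / 4) < ρ := by
      have h4 := hN₃ n hn3
      have h5 : t n * (2 * CR + ε / 2 + ε / 4) < (ρ / (2 * CR + ε)) * (2 * CR + ε) := by
        have h6 : t n * (2 * CR + ε / 2 + ε / 4) ≤ t n * (2 * CR + ε) :=
          mul_le_mul_of_nonneg_left (by linarith) htn.le
        have h7 : t n * (2 * CR + ε) < (ρ / (2 * CR + ε)) * (2 * CR + ε) :=
          mul_lt_mul_of_pos_right h4 hden
        linarith
      rwa [div_mul_cancel₀ ρ (ne_of_gt hden)] at h5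
    nlinarith
  have hDθn : A - ε / 8 < D θn := hgapρ θn hθnΘ hFθn
  have hlow : L + t n * (2 * A - ε / 2) < Ln := by
    have h1 : 2 * A - 3 * (ε / 8) < R n θn := by
      have := abs_lt.mp hRn; linarith
    have h2 : t n * (2 * A - 3 * (ε / 8)) < t n * R n θn := mul_lt_mul_of_pos_left h1 htn
    have h3 := hLle θn hθnΘ
    have h4 : t n * (2 * A - ε / 2) = t n * (2 * A - 3 * (ε / 8)) - t n * (ε / 8) := by ring
    linarith
  have hupper : (Ln - L) / t n < 2 * A + ε := by
    rw [div_lt_iff₀ htn]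
    have h5 : t n * (2 * A + ε / 4 + ε / 8) < t n * (2 * A + ε) :=
      mul_lt_mul_of_pos_left (by linarith) htn
    have h6 : (2 * A + ε) * t n = t n * (2 * A + ε) := mul_comm _ _
    linarith
  have hlower : 2 * A - ε < (Ln - L) / t n := by
    rw [lt_div_iff₀ htn]
    have h5 : t n * (2 * A - ε) < t n * (2 * A - ε / 2) :=
      mul_lt_mul_of_pos_left (by linarith) htn
    have h6 : (2 * A - ε) * t n = t n * (2 * A - ε) := mul_comm _ _
    linarith
  rw [Real.dist_eq, abs_lt]
  constructor <;> linarith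

/-- Lemma 2 of the paper: the first-order Hadamard directional
derivative of `L(ψ) = inf_{θ∈Θ} ∫ ψ(x,θ)² dν(x)` at `φ` in the direction `h` is
`2 · inf_{θ∈Θ₀(φ)} ∫ φ(x,θ) h(x,θ) dν(x)`, where `Θ₀(φ)` is the (nonempty) argmin set. -/
theorem stmt_6
    (d : ℕ) (Θ : Set (EuclideanSpace ℝ (Fin d)))
    (hΘne : Θ.Nonempty) (hΘcomp : IsCompact Θ)
    (ν : Measure ℝ) [IsProbabilityMeasure ν]
    (φ h : ℝ → EuclideanSpace ℝ (Fin d) → ℝ)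
    (hφmeas : ∀ θ, Measurable fun x => φ x θ)
    (hhmeas : ∀ θ, Measurable fun x => h x θ)
    -- φ and h are bounded
    (hφb : ∃ M, ∀ x θ, |φ x θ| ≤ M)
    (hhb : ∃ M, ∀ x θ, |h x θ| ≤ M)
    -- φ and h are L²(ν)-continuous in θ
    (hφc : ∀ θ₀ ∈ Θ, ∀ ε > 0, ∃ δ > 0, ∀ θ ∈ Θ, ‖θ - θ₀‖ < δ →
      ∫ x, (φ x θ - φ x θ₀) ^ 2 ∂ν < ε)
    (hhc : ∀ θ₀ ∈ Θ, ∀ ε > 0, ∃ δ > 0, ∀ θ ∈ Θ, ‖θ - θ₀‖ < δ →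
      ∫ x, (h x θ - h x θ₀) ^ 2 ∂ν < ε)
    -- the argmin set Θ₀(φ)
    (Θ₀ : Set (EuclideanSpace ℝ (Fin d)))
    (hΘ₀def : Θ₀ = {θ ∈ Θ | ∀ ϑ ∈ Θ, ∫ x, (φ x θ) ^ 2 ∂ν ≤ ∫ x, (φ x ϑ) ^ 2 ∂ν})
    -- sequences t_n ↓ 0 and bounded h_n with ‖h_n − h‖∞ → 0
    (t : ℕ → ℝ) (htpos : ∀ n, 0 < t n) (ht0 : Tendsto t atTop (𝓝 0))
    (hn : ℕ → ℝ → EuclideanSpace ℝ (Fin d) → ℝ)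
    (hnmeas : ∀ n θ, Measurable fun x => hn n x θ)
    (hnb : ∀ n, ∃ M, ∀ x θ, |hn n x θ| ≤ M)
    (hnconv : ∀ ε > 0, ∃ N, ∀ n ≥ N, ∀ x θ, |hn n x θ - h x θ| ≤ ε) :
    Θ₀.Nonempty ∧
    Tendsto
      (fun n =>
        (sInf ((fun θ => ∫ x, (φ x θ + t n * hn n x θ) ^ 2 ∂ν) '' Θ) -
            sInf ((fun θ => ∫ x, (φ x θ) ^ 2 ∂ν) '' Θ)) / t n)
      atTop
      (𝓝 (2 * sInf ((fun θ => ∫ x, φ x θ * h x θ ∂ν) '' Θ₀))) := by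
  obtain ⟨θ0, hθ0Θ⟩ := hΘne
  obtain ⟨Mφ, hMφ⟩ := hφb
  obtain ⟨Mh, hMh⟩ := hhb
  have hMφ0 : 0 ≤ Mφ := le_trans (abs_nonneg _) (hMφ 0 θ0)
  have hMh0 : 0 ≤ Mh := le_trans (abs_nonneg _) (hMh 0 θ0)
  have hInt : ∀ (f : ℝ → ℝ) (C : ℝ), Measurable f → (∀ x, |f x| ≤ C) → Integrable f ν := by
    intro f C hf hC
    refine ⟨hf.aestronglyMeasurable, ?_⟩
    exact HasFiniteIntegral.of_bounded (C := C)
      (Filter.Eventually.of_forall fun x => by simpa [Real.norm_eq_abs] using hC x)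
  have habsint : ∀ f : ℝ → ℝ, |∫ x, f x ∂ν| ≤ ∫ x, |f x| ∂ν := fun f => by
    simpa [Real.norm_eq_abs] using norm_integral_le_integral_norm (μ := ν) f
  -- L² smallness implies L¹ smallness
  have hL12 : ∀ (f : ℝ → ℝ) (C η : ℝ), Measurable f → (∀ x, |f x| ≤ C) → 0 < η →
      (∫ x, (f x) ^ 2 ∂ν) < η ^ 2 → (∫ x, |f x| ∂ν) < η := by
    intro f C η hf hC hη hsq
    have hIf : Integrable (fun x => |f x|) ν := hInt _ C hf.abs fun x => by rw [abs_abs]; exact hC x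
    have hIf2 : Integrable (fun x => (f x) ^ 2) ν := by
      refine hInt _ (C ^ 2) (hf.pow_const 2) fun x => ?_
      rw [abs_pow]
      exact pow_le_pow_left₀ (abs_nonneg _) (hC x) 2
    have hpt : ∀ x, 2 * η * |f x| ≤ (f x) ^ 2 + η ^ 2 := fun x => by
      nlinarith [sq_nonneg (|f x| - η), sq_abs (f x)]
    have hmono : (∫ x, 2 * η * |f x| ∂ν) ≤ ∫ x, ((f x) ^ 2 + η ^ 2) ∂ν :=
      integral_mono (hIf.const_mul _) (hIf2.add (integrable_const _)) hpt
    rw [integral_const_mul, integral_add hIf2 (integrable_const _), integral_const] at hmono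
    simp only [probReal_univ, one_smul] at hmono
    nlinarith
  have hIφ2 : ∀ θ, Integrable (fun x => (φ x θ) ^ 2) ν := fun θ => by
    refine hInt _ (Mφ ^ 2) ((hφmeas θ).pow_const 2) fun x => ?_
    rw [abs_pow]; exact pow_le_pow_left₀ (abs_nonneg _) (hMφ x θ) 2
  have hIφh : ∀ θ θ', Integrable (fun x => φ x θ * h x θ') ν := fun θ θ' => by
    refine hInt _ (Mφ * Mh) ((hφmeas θ).mul (hhmeas θ')) fun x => ?_
    rw [abs_mul]; exact mul_le_mul (hMφ x θ) (hMh x θ') (abs_nonneg _) hMφ0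
  -- continuity of F
  have hFcont : ContinuousOn (fun θ => ∫ x, (φ x θ) ^ 2 ∂ν) Θ := by
    rw [Metric.continuousOn_iff]
    intro θ₀ hθ₀ ε hε
    have hden : (0:ℝ) < 2 * Mφ + 1 := by linarith
    have hηpos : 0 < ε / (2 * Mφ + 1) := div_pos hε hden
    obtain ⟨δ, hδ, hδ'⟩ := hφc θ₀ hθ₀ ((ε / (2 * Mφ + 1)) ^ 2) (pow_pos hηpos 2)
    refine ⟨δ, hδ, fun θ hθ hdist => ?_⟩
    have hsq := hδ' θ hθ (by rwa [← dist_eq_norm])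
    have hd1 : (∫ x, |φ x θ - φ x θ₀| ∂ν) < ε / (2 * Mφ + 1) := by
      refine hL12 _ (2 * Mφ) _ ((hφmeas θ).sub (hφmeas θ₀)) (fun x => ?_) hηpos hsq
      have h1 := hMφ x θ; have h2 := hMφ x θ₀
      have h3 := abs_sub (φ x θ) (φ x θ₀)
      linarith
    rw [Real.dist_eq]
    have hIdiff : Integrable (fun x => (φ x θ - φ x θ₀) * (φ x θ + φ x θ₀)) ν := by
      refine hInt _ (2 * Mφ * (2 * Mφ))
        (((hφmeas θ).sub (hφmeas θ₀)).mul ((hφmeas θ).add (hφmeas θ₀))) fun x => ?_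
      rw [abs_mul]
      have h1 := hMφ x θ; have h2 := hMφ x θ₀
      have h3 : |φ x θ - φ x θ₀| ≤ 2 * Mφ := by
        have := abs_sub (φ x θ) (φ x θ₀); linarith
      have h4 : |φ x θ + φ x θ₀| ≤ 2 * Mφ := by
        have := abs_add_le (φ x θ) (φ x θ₀); linarith
      exact mul_le_mul h3 h4 (abs_nonneg _) (by linarith)
    have heq : (∫ x, (φ x θ) ^ 2 ∂ν) - (∫ x, (φ x θ₀) ^ 2 ∂ν)
        = ∫ x, (φ x θ - φ x θ₀) * (φ x θ + φ x θ₀) ∂ν := by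
      rw [← integral_sub (hIφ2 θ) (hIφ2 θ₀)]
      congr 1; funext x; ring
    have hIabs : Integrable (fun x => 2 * Mφ * |φ x θ - φ x θ₀|) ν := by
      refine Integrable.const_mul ?_ _
      exact hInt _ (2 * Mφ) ((hφmeas θ).sub (hφmeas θ₀)).abs fun x => by
        rw [abs_abs]
        have h1 := hMφ x θ; have h2 := hMφ x θ₀
        have := abs_sub (φ x θ) (φ x θ₀); linarith
    have hchain : |(∫ x, (φ x θ) ^ 2 ∂ν) - ∫ x, (φ x θ₀) ^ 2 ∂ν|
        ≤ 2 * Mφ * ∫ x, |φ x θ - φ x θ₀| ∂ν := by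
      rw [heq]
      refine le_trans (habsint _) ?_
      rw [← integral_const_mul]
      refine integral_mono hIdiff.abs hIabs fun x => ?_
      rw [abs_mul]
      have h1 := hMφ x θ; have h2 := hMφ x θ₀
      have h4 : |φ x θ + φ x θ₀| ≤ 2 * Mφ := by
        have := abs_add_le (φ x θ) (φ x θ₀); linarith
      nlinarith [abs_nonneg (φ x θ - φ x θ₀)]
    have h5 : 2 * Mφ * (∫ x, |φ x θ - φ x θ₀| ∂ν) ≤ 2 * Mφ * (ε / (2 * Mφ + 1)) :=
      mul_le_mul_of_nonneg_left hd1.le (by linarith)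
    have hq : (ε / (2 * Mφ + 1)) * (2 * Mφ + 1) = ε := div_mul_cancel₀ _ (ne_of_gt hden)
    linarith [hηpos]
  -- continuity of D
  have hDcont : ContinuousOn (fun θ => ∫ x, φ x θ * h x θ ∂ν) Θ := by
    rw [Metric.continuousOn_iff]
    intro θ₀ hθ₀ ε hε
    have hden : (0:ℝ) < Mφ + Mh + 1 := by linarith
    have hηpos : 0 < ε / (Mφ + Mh + 1) := div_pos hε hden
    obtain ⟨δ₁, hδ₁, hδ₁'⟩ := hφc θ₀ hθ₀ ((ε / (Mφ + Mh + 1)) ^ 2) (pow_pos hηpos 2)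
    obtain ⟨δ₂, hδ₂, hδ₂'⟩ := hhc θ₀ hθ₀ ((ε / (Mφ + Mh + 1)) ^ 2) (pow_pos hηpos 2)
    refine ⟨min δ₁ δ₂, lt_min hδ₁ hδ₂, fun θ hθ hdist => ?_⟩
    rw [dist_eq_norm] at hdist
    have hd1 : (∫ x, |φ x θ - φ x θ₀| ∂ν) < ε / (Mφ + Mh + 1) := by
      refine hL12 _ (2 * Mφ) _ ((hφmeas θ).sub (hφmeas θ₀)) (fun x => ?_) hηpos
        (hδ₁' θ hθ (lt_of_lt_of_le hdist (min_le_left _ _)))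
      have h1 := hMφ x θ; have h2 := hMφ x θ₀
      have h3 := abs_sub (φ x θ) (φ x θ₀); linarith
    have hd2 : (∫ x, |h x θ - h x θ₀| ∂ν) < ε / (Mφ + Mh + 1) := by
      refine hL12 _ (2 * Mh) _ ((hhmeas θ).sub (hhmeas θ₀)) (fun x => ?_) hηpos
        (hδ₂' θ hθ (lt_of_lt_of_le hdist (min_le_right _ _)))
      have h1 := hMh x θ; have h2 := hMh x θ₀
      have h3 := abs_sub (h x θ) (h x θ₀); linarith
    rw [Real.dist_eq]
    have hdb1 : ∀ x, |φ x θ - φ x θ₀| ≤ 2 * Mφ := fun x => by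
      have := abs_sub (φ x θ) (φ x θ₀); have h1 := hMφ x θ; have h2 := hMφ x θ₀; linarith
    have hdb2 : ∀ x, |h x θ - h x θ₀| ≤ 2 * Mh := fun x => by
      have := abs_sub (h x θ) (h x θ₀); have h1 := hMh x θ; have h2 := hMh x θ₀; linarith
    have hI1 : Integrable (fun x => (φ x θ - φ x θ₀) * h x θ) ν := by
      refine hInt _ (2 * Mφ * Mh) (((hφmeas θ).sub (hφmeas θ₀)).mul (hhmeas θ)) fun x => ?_
      rw [abs_mul]
      exact mul_le_mul (hdb1 x) (hMh x θ) (abs_nonneg _) (by linarith)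
    have hI2 : Integrable (fun x => (h x θ - h x θ₀) * φ x θ₀) ν := by
      refine hInt _ (2 * Mh * Mφ) (((hhmeas θ).sub (hhmeas θ₀)).mul (hφmeas θ₀)) fun x => ?_
      rw [abs_mul]
      exact mul_le_mul (hdb2 x) (hMφ x θ₀) (abs_nonneg _) (by linarith)
    have heq : (∫ x, φ x θ * h x θ ∂ν) - (∫ x, φ x θ₀ * h x θ₀ ∂ν)
        = (∫ x, (φ x θ - φ x θ₀) * h x θ ∂ν) + ∫ x, (h x θ - h x θ₀) * φ x θ₀ ∂ν := by
      rw [← integral_add hI1 hI2, ← integral_sub (hIφh θ θ) (hIφh θ₀ θ₀)]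
      congr 1; funext x; ring
    have hIa1 : Integrable (fun x => Mh * |φ x θ - φ x θ₀|) ν :=
      Integrable.const_mul (hInt _ (2 * Mφ) ((hφmeas θ).sub (hφmeas θ₀)).abs fun x => by
        rw [abs_abs]; exact hdb1 x) _
    have hIa2 : Integrable (fun x => Mφ * |h x θ - h x θ₀|) ν :=
      Integrable.const_mul (hInt _ (2 * Mh) ((hhmeas θ).sub (hhmeas θ₀)).abs fun x => by
        rw [abs_abs]; exact hdb2 x) _
    have hb1 : |∫ x, (φ x θ - φ x θ₀) * h x θ ∂ν| ≤ Mh * ∫ x, |φ x θ - φ x θ₀| ∂ν := by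
      refine le_trans (habsint _) ?_
      rw [← integral_const_mul]
      refine integral_mono hI1.abs hIa1 fun x => ?_
      rw [abs_mul]
      nlinarith [hMh x θ, abs_nonneg (φ x θ - φ x θ₀), abs_nonneg (h x θ)]
    have hb2 : |∫ x, (h x θ - h x θ₀) * φ x θ₀ ∂ν| ≤ Mφ * ∫ x, |h x θ - h x θ₀| ∂ν := by
      refine le_trans (habsint _) ?_
      rw [← integral_const_mul]
      refine integral_mono hI2.abs hIa2 fun x => ?_
      rw [abs_mul]
      nlinarith [hMφ x θ₀, abs_nonneg (h x θ - h x θ₀), abs_nonneg (φ x θ₀)]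
    have h5 : Mh * (∫ x, |φ x θ - φ x θ₀| ∂ν) ≤ Mh * (ε / (Mφ + Mh + 1)) :=
      mul_le_mul_of_nonneg_left hd1.le hMh0
    have h6 : Mφ * (∫ x, |h x θ - h x θ₀| ∂ν) ≤ Mφ * (ε / (Mφ + Mh + 1)) :=
      mul_le_mul_of_nonneg_left hd2.le hMφ0
    have hq : (ε / (Mφ + Mh + 1)) * (Mφ + Mh + 1) = ε := div_mul_cancel₀ _ (ne_of_gt hden)
    have htri := abs_add_le (∫ x, (φ x θ - φ x θ₀) * h x θ ∂ν)
      (∫ x, (h x θ - h x θ₀) * φ x θ₀ ∂ν)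
    rw [heq]
    linarith [hηpos]
  -- membership characterization of the argmin set
  have hmem : ∀ θ, θ ∈ Θ₀ ↔ θ ∈ Θ ∧ ∀ ϑ ∈ Θ,
      (fun θ => ∫ x, (φ x θ) ^ 2 ∂ν) θ ≤ (fun θ => ∫ x, (φ x θ) ^ 2 ∂ν) ϑ := by
    intro θ; rw [hΘ₀def]; exact Set.mem_sep_iff
  -- the remainder terms R n θ
  have hRclose : ∀ ε > 0, ∃ N, ∀ n ≥ N, ∀ θ ∈ Θ,
      |(fun n θ => ∫ x, (2 * (φ x θ * hn n x θ) + t n * (hn n x θ) ^ 2) ∂ν) n θ -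
        2 * (fun θ => ∫ x, φ x θ * h x θ ∂ν) θ| < ε := by
    intro ε hε
    simp only
    obtain ⟨N₁, hN₁⟩ := hnconv 1 one_pos
    have hden : (0:ℝ) < 4 * (Mφ + 1) := by linarith
    have hqpos : 0 < ε / (4 * (Mφ + 1)) := div_pos hε hden
    obtain ⟨N₂, hN₂⟩ := hnconv (ε / (4 * (Mφ + 1))) hqpos
    have hden2 : (0:ℝ) < 2 * (Mh + 1) ^ 2 := by positivity
    obtain ⟨N₃, hN₃'⟩ := (Metric.tendsto_atTop.mp ht0) (ε / (2 * (Mh + 1) ^ 2))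
      (div_pos hε hden2)
    refine ⟨max N₁ (max N₂ N₃), fun n hnN θ _ => ?_⟩
    have hn1 : n ≥ N₁ := le_trans (le_max_left _ _) hnN
    have hn2 : n ≥ N₂ := le_trans (le_trans (le_max_left _ _) (le_max_right _ _)) hnN
    have hn3 : n ≥ N₃ := le_trans (le_trans (le_max_right _ _) (le_max_right _ _)) hnN
    have htn := (htpos n).le
    have htb : t n < ε / (2 * (Mh + 1) ^ 2) := by
      have := hN₃' n hn3
      rw [Real.dist_eq, sub_zero] at this
      exact lt_of_le_of_lt (le_abs_self _) this
    have hb1 : ∀ x θ', |hn n x θ'| ≤ Mh + 1 := by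
      intro x θ'
      have h1 := hN₁ n hn1 x θ'
      have h2 := hMh x θ'
      have h3 : |hn n x θ'| ≤ |hn n x θ' - h x θ'| + |h x θ'| := by
        have := abs_add_le (hn n x θ' - h x θ') (h x θ'); simpa using this
      linarith
    obtain ⟨Mn, hMn⟩ := hnb n
    have hMn0 : 0 ≤ Mn := le_trans (abs_nonneg _) (hMn 0 θ0)
    have hIR : Integrable (fun x => 2 * (φ x θ * hn n x θ) + t n * (hn n x θ) ^ 2) ν := by
      refine hInt _ (2 * (Mφ * Mn) + t n * Mn ^ 2)
        ((measurable_const.mul ((hφmeas θ).mul (hnmeas n θ))).add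
          (measurable_const.mul ((hnmeas n θ).pow_const 2))) fun x => ?_
      have h1 := hMφ x θ; have h2 := hMn x θ
      have h4 : |2 * (φ x θ * hn n x θ)| ≤ 2 * (Mφ * Mn) := by
        rw [abs_mul, abs_mul]
        have h7 : |(2:ℝ)| = 2 := by norm_num
        rw [h7]
        have := mul_le_mul h1 h2 (abs_nonneg _) hMφ0
        linarith
      have h5 : |t n * (hn n x θ) ^ 2| ≤ t n * Mn ^ 2 := by
        rw [abs_mul, abs_of_nonneg htn, abs_pow]
        exact mul_le_mul_of_nonneg_left (pow_le_pow_left₀ (abs_nonneg _) h2 2) htn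
      calc |2 * (φ x θ * hn n x θ) + t n * (hn n x θ) ^ 2|
          ≤ |2 * (φ x θ * hn n x θ)| + |t n * (hn n x θ) ^ 2| := abs_add_le _ _
        _ ≤ 2 * (Mφ * Mn) + t n * Mn ^ 2 := by linarith
    have hptb : ∀ x, |2 * (φ x θ * (hn n x θ - h x θ)) + t n * (hn n x θ) ^ 2|
        ≤ 2 * (Mφ * (ε / (4 * (Mφ + 1)))) + t n * (Mh + 1) ^ 2 := by
      intro x
      have h1 := hMφ x θ; have h2 := hN₂ n hn2 x θ
      have h4 : |2 * (φ x θ * (hn n x θ - h x θ))| ≤ 2 * (Mφ * (ε / (4 * (Mφ + 1)))) := by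
        rw [abs_mul, abs_mul]
        have h7 : |(2:ℝ)| = 2 := by norm_num
        rw [h7]
        have := mul_le_mul h1 h2 (abs_nonneg _) hMφ0
        linarith
      have h5 : |t n * (hn n x θ) ^ 2| ≤ t n * (Mh + 1) ^ 2 := by
        rw [abs_mul, abs_of_nonneg htn, abs_pow]
        exact mul_le_mul_of_nonneg_left (pow_le_pow_left₀ (abs_nonneg _) (hb1 x θ) 2) htn
      calc |2 * (φ x θ * (hn n x θ - h x θ)) + t n * (hn n x θ) ^ 2|
          ≤ |2 * (φ x θ * (hn n x θ - h x θ))| + |t n * (hn n x θ) ^ 2| := abs_add_le _ _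
        _ ≤ _ := by linarith
    have hImix : Integrable
        (fun x => 2 * (φ x θ * (hn n x θ - h x θ)) + t n * (hn n x θ) ^ 2) ν := by
      refine hInt _ (2 * (Mφ * (ε / (4 * (Mφ + 1)))) + t n * (Mh + 1) ^ 2)
        ((measurable_const.mul ((hφmeas θ).mul ((hnmeas n θ).sub (hhmeas θ)))).add
          (measurable_const.mul ((hnmeas n θ).pow_const 2))) hptb
    have heq : (∫ x, (2 * (φ x θ * hn n x θ) + t n * (hn n x θ) ^ 2) ∂ν) -
        2 * (∫ x, φ x θ * h x θ ∂ν)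
        = ∫ x, (2 * (φ x θ * (hn n x θ - h x θ)) + t n * (hn n x θ) ^ 2) ∂ν := by
      rw [← integral_const_mul, ← integral_sub hIR ((hIφh θ θ).const_mul 2)]
      congr 1; funext x; ring
    rw [heq]
    have hle : |∫ x, (2 * (φ x θ * (hn n x θ - h x θ)) + t n * (hn n x θ) ^ 2) ∂ν|
        ≤ 2 * (Mφ * (ε / (4 * (Mφ + 1)))) + t n * (Mh + 1) ^ 2 := by
      refine le_trans (habsint _) ?_
      have := integral_mono hImix.abs (integrable_const
        (2 * (Mφ * (ε / (4 * (Mφ + 1)))) + t n * (Mh + 1) ^ 2)) hptb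
      rwa [integral_const, probReal_univ, one_smul] at this
    have hq : (ε / (4 * (Mφ + 1))) * (4 * (Mφ + 1)) = ε := div_mul_cancel₀ _ (ne_of_gt hden)
    have hq2 : t n * (2 * (Mh + 1) ^ 2) < ε := by
      have := mul_lt_mul_of_pos_right htb hden2
      rwa [div_mul_cancel₀ _ (ne_of_gt hden2)] at this
    have hq3 : t n * (2 * (Mh + 1) ^ 2) = 2 * (t n * (Mh + 1) ^ 2) := by ring
    refine lt_of_le_of_lt hle ?_
    nlinarith [hqpos]
  -- apply the abstract lemma
  have key := aux_hadamard Θ Θ₀ ⟨θ0, hθ0Θ⟩ hΘcomp (fun θ => ∫ x, (φ x θ) ^ 2 ∂ν)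
    (fun θ => ∫ x, φ x θ * h x θ ∂ν) hFcont hDcont hmem t htpos ht0
    (fun n θ => ∫ x, (2 * (φ x θ * hn n x θ) + t n * (hn n x θ) ^ 2) ∂ν) hRclose
  refine ⟨key.1, ?_⟩
  have hexp : ∀ n θ, (∫ x, (φ x θ + t n * hn n x θ) ^ 2 ∂ν)
      = (∫ x, (φ x θ) ^ 2 ∂ν) +
        t n * ∫ x, (2 * (φ x θ * hn n x θ) + t n * (hn n x θ) ^ 2) ∂ν := by
    intro n θ
    obtain ⟨Mn, hMn⟩ := hnb n
    have hMn0 : 0 ≤ Mn := le_trans (abs_nonneg _) (hMn 0 θ0)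
    have htn := (htpos n).le
    have hIR : Integrable (fun x => 2 * (φ x θ * hn n x θ) + t n * (hn n x θ) ^ 2) ν := by
      refine hInt _ (2 * (Mφ * Mn) + t n * Mn ^ 2)
        ((measurable_const.mul ((hφmeas θ).mul (hnmeas n θ))).add
          (measurable_const.mul ((hnmeas n θ).pow_const 2))) fun x => ?_
      have h1 := hMφ x θ; have h2 := hMn x θ
      have h4 : |2 * (φ x θ * hn n x θ)| ≤ 2 * (Mφ * Mn) := by
        rw [abs_mul, abs_mul]
        have h7 : |(2:ℝ)| = 2 := by norm_num
        rw [h7]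
        have := mul_le_mul h1 h2 (abs_nonneg _) hMφ0
        linarith
      have h5 : |t n * (hn n x θ) ^ 2| ≤ t n * Mn ^ 2 := by
        rw [abs_mul, abs_of_nonneg htn, abs_pow]
        exact mul_le_mul_of_nonneg_left (pow_le_pow_left₀ (abs_nonneg _) h2 2) htn
      calc |2 * (φ x θ * hn n x θ) + t n * (hn n x θ) ^ 2|
          ≤ |2 * (φ x θ * hn n x θ)| + |t n * (hn n x θ) ^ 2| := abs_add_le _ _
        _ ≤ 2 * (Mφ * Mn) + t n * Mn ^ 2 := by linarith
    have heq2 : (fun x => (φ x θ + t n * hn n x θ) ^ 2)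
        = fun x => (φ x θ) ^ 2 + t n * (2 * (φ x θ * hn n x θ) + t n * (hn n x θ) ^ 2) := by
      funext x; ring
    calc (∫ x, (φ x θ + t n * hn n x θ) ^ 2 ∂ν)
        = ∫ x, ((φ x θ) ^ 2 + t n * (2 * (φ x θ * hn n x θ) + t n * (hn n x θ) ^ 2)) ∂ν := by
          rw [heq2]
      _ = _ := by rw [integral_add (hIφ2 θ) (hIR.const_mul (t n)), integral_const_mul]
  have himg : ∀ n, ((fun θ => ∫ x, (φ x θ + t n * hn n x θ) ^ 2 ∂ν) '' Θ)
      = ((fun θ => (∫ x, (φ x θ) ^ 2 ∂ν) +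
          t n * ∫ x, (2 * (φ x θ * hn n x θ) + t n * (hn n x θ) ^ 2) ∂ν) '' Θ) := by
    intro n
    exact congrArg (fun f => f '' Θ) (funext fun θ => hexp n θ)
  simp only [himg]
  exact key.2
end

section
/- Assume: Θ ⊂ ℝ^d is nonempty and compact; ν is a Borel probability measure on ℝ; φ : ℝ × Θ → ℝ is bounded and L²(ν)-continuous in θ with L(φ) = inf_{θ∈Θ} ∫ φ(x,θ)² dν(x) = 0; the set Θ₀ = {θ ∈ Θ : ∫ φ(x,θ)² dν(x) = 0} is nonempty and contained in the interior of Θ; and there exist κ ∈ (0,1] and C > 0 such that for all sufficiently small ε > 0, inf over θ ∈ Θ with dist₂(θ,Θ₀) > ε of (∫ φ(x,θ)² dν(x))^{1/2} is at least C·ε^κ. Let h : ℝ × Θ → ℝ be bounded and L²(ν)-continuous in θ with ‖h‖∞ > 0, and set a = (3‖h‖∞/C)^{1/κ}. Then there exists t̄ > 0 such that for every t ∈ (0, t̄]: inf over θ ∈ Θ with dist₂(θ,Θ₀) > a·t of (∫ (φ(x,θ) + t·h(x,θ))² dν(x))^{1/2} is strictly greater than (L(φ + t·h))^{1/2}; consequently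 L(φ + t·h) equals the infimum of ∫ (φ(x,θ) + t·h(x,θ))² dν(x) over θ ∈ Θ with dist₂(θ,Θ₀) ≤ a·t. -/
open MeasureTheory Filter Topology


private lemma memL2_of_bound (ν : Measure ℝ) [IsProbabilityMeasure ν] (f : ℝ → ℝ)
    (hm : Measurable f) (M : ℝ) (hb : ∀ x, |f x| ≤ M) : MemLp f 2 ν :=
  (memLp_top_of_bound hm.aestronglyMeasurable M
    (ae_of_all _ fun x => by simpa [Real.norm_eq_abs] using hb x)).mono_exponent le_top

private lemma norm_toLp_eq_sqrt (ν : Measure ℝ) (f : ℝ → ℝ) (hf : MemLp f 2 ν) :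
    ‖hf.toLp f‖ = Real.sqrt (∫ x, f x ^ 2 ∂ν) := by
  have h1 : (‖hf.toLp f‖ : ℝ) ^ 2 = ∫ x, f x ^ 2 ∂ν := by
    rw [← real_inner_self_eq_norm_sq, MeasureTheory.L2.inner_def]
    refine integral_congr_ae ?_
    filter_upwards [hf.coeFn_toLp] with x hx
    rw [real_inner_self_eq_norm_sq, hx, Real.norm_eq_abs, sq_abs]
  rw [← h1, Real.sqrt_sq (norm_nonneg _)]

private lemma sqrt_L2_add_le (ν : Measure ℝ) (f g : ℝ → ℝ)
    (hf : MemLp f 2 ν) (hg : MemLp g 2 ν) :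
    Real.sqrt (∫ x, (f x + g x) ^ 2 ∂ν) ≤
      Real.sqrt (∫ x, f x ^ 2 ∂ν) + Real.sqrt (∫ x, g x ^ 2 ∂ν) := by
  have hfg : MemLp (f + g) 2 ν := hf.add hg
  have h1 : Real.sqrt (∫ x, (f x + g x) ^ 2 ∂ν) = ‖hfg.toLp (f + g)‖ := by
    rw [norm_toLp_eq_sqrt]
    simp [Pi.add_apply]
  rw [h1, ← norm_toLp_eq_sqrt ν f hf, ← norm_toLp_eq_sqrt ν g hg,
    MemLp.toLp_add]
  exact norm_add_le _ _

private lemma sqrt_L2_rev (ν : Measure ℝ) (f g : ℝ → ℝ)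
    (hf : MemLp f 2 ν) (hg : MemLp g 2 ν) :
    Real.sqrt (∫ x, f x ^ 2 ∂ν) - Real.sqrt (∫ x, g x ^ 2 ∂ν) ≤
      Real.sqrt (∫ x, (f x + g x) ^ 2 ∂ν) := by
  have := sqrt_L2_add_le ν (fun x => f x + g x) (fun x => -g x) (hf.add hg) hg.neg
  simp only [add_neg_cancel_right, neg_sq] at this
  linarith
/-- localization step in the proof of Lemma 3 of the paper: for all
small `t > 0`, the infimum defining `L(φ + t·h)` may be restricted to the `a·t`
neighborhood of the identified set `Θ₀`, the infimum outside being strictly larger. -/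
theorem stmt_9
    (d : ℕ)
    (Θ : Set (EuclideanSpace ℝ (Fin d))) (hΘne : Θ.Nonempty) (hΘcomp : IsCompact Θ)
    (ν : Measure ℝ) [IsProbabilityMeasure ν]
    (φ : ℝ → EuclideanSpace ℝ (Fin d) → ℝ)
    (hφmeas : ∀ θ, Measurable fun x => φ x θ)
    (hφb : ∃ M, ∀ x θ, |φ x θ| ≤ M)
    (hφc : ∀ θ₀ ∈ Θ, ∀ ε > 0, ∃ δ > 0, ∀ θ ∈ Θ, ‖θ - θ₀‖ < δ →
      ∫ x, (φ x θ - φ x θ₀) ^ 2 ∂ν < ε)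
    -- the null: L(φ) = 0
    (hL0 : sInf ((fun θ => ∫ x, (φ x θ) ^ 2 ∂ν) '' Θ) = 0)
    -- the identified set Θ₀
    (Θ₀ : Set (EuclideanSpace ℝ (Fin d)))
    (hΘ₀def : Θ₀ = {θ ∈ Θ | ∫ x, (φ x θ) ^ 2 ∂ν = 0})
    (hΘ₀ne : Θ₀.Nonempty) (hΘ₀int : Θ₀ ⊆ interior Θ)
    -- partial identification condition with constants κ ∈ (0,1] and C > 0
    (κ C : ℝ) (hκ0 : 0 < κ) (hκ1 : κ ≤ 1) (hC : 0 < C)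
    (hident : ∃ ε₀ > 0, ∀ ε : ℝ, 0 < ε → ε ≤ ε₀ → ∀ θ ∈ Θ,
      ε < Metric.infDist θ Θ₀ →
        C * ε ^ κ ≤ Real.sqrt (∫ x, (φ x θ) ^ 2 ∂ν))
    -- the direction h: bounded, L²(ν)-continuous in θ, with ‖h‖∞ > 0
    (h : ℝ → EuclideanSpace ℝ (Fin d) → ℝ)
    (hhmeas : ∀ θ, Measurable fun x => h x θ)
    (hhb : ∃ M, ∀ x θ, |h x θ| ≤ M)
    (hhc : ∀ θ₀ ∈ Θ, ∀ ε > 0, ∃ δ > 0, ∀ θ ∈ Θ, ‖θ - θ₀‖ < δ →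
      ∫ x, (h x θ - h x θ₀) ^ 2 ∂ν < ε)
    (hsup : ℝ) (hsupdef : hsup = ⨆ p : ℝ × Θ, |h p.1 p.2.1|) (hsuppos : 0 < hsup)
    -- a = (3‖h‖∞ / C)^{1/κ}
    (a : ℝ) (hadef : a = (3 * hsup / C) ^ (κ⁻¹)) :
    ∃ tbar > (0 : ℝ), ∀ t : ℝ, 0 < t → t ≤ tbar →
      -- the infimum outside the a·t neighborhood of Θ₀ strictly exceeds √(L(φ+t·h))
      (∃ c : ℝ,
        Real.sqrt (sInf ((fun θ => ∫ x, (φ x θ + t * h x θ) ^ 2 ∂ν) '' Θ)) < c ∧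
        ∀ θ ∈ Θ, a * t < Metric.infDist θ Θ₀ →
          c ≤ Real.sqrt (∫ x, (φ x θ + t * h x θ) ^ 2 ∂ν)) ∧
      -- consequently L(φ+t·h) equals the infimum over the a·t neighborhood of Θ₀
      sInf ((fun θ => ∫ x, (φ x θ + t * h x θ) ^ 2 ∂ν) '' Θ) =
        sInf ((fun θ => ∫ x, (φ x θ + t * h x θ) ^ 2 ∂ν) ''
          {θ ∈ Θ | Metric.infDist θ Θ₀ ≤ a * t}) := by
  obtain ⟨Mφ, hMφ⟩ := hφb
  obtain ⟨Mh, hMh⟩ := hhb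
  obtain ⟨ε₀, hε₀pos, hid⟩ := hident
  obtain ⟨θ₀, hθ₀⟩ := hΘ₀ne
  have hθ₀Θ : θ₀ ∈ Θ := by rw [hΘ₀def] at hθ₀; exact hθ₀.1
  have hθ₀0 : ∫ x, (φ x θ₀) ^ 2 ∂ν = 0 := by rw [hΘ₀def] at hθ₀; exact hθ₀.2
  -- positivity of a
  have hbase : 0 < 3 * hsup / C := by positivity
  have hapos : 0 < a := by rw [hadef]; exact Real.rpow_pos_of_pos hbase _
  have haκ : a ^ κ = 3 * hsup / C := by
    rw [hadef]; exact Real.rpow_inv_rpow hbase.le hκ0.ne'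
  -- sup bound on h over Θ
  have hsb : ∀ (x : ℝ), ∀ θ ∈ Θ, |h x θ| ≤ hsup := by
    intro x θ hθ
    rw [hsupdef]
    exact le_ciSup (f := fun p : ℝ × Θ => |h p.1 p.2.1|)
      ⟨Mh, by rintro y ⟨p, rfl⟩; exact hMh _ _⟩ (x, ⟨θ, hθ⟩)
  -- MemLp facts
  have memφ : ∀ θ, MemLp (fun x => φ x θ) 2 ν := fun θ =>
    memL2_of_bound ν _ (hφmeas θ) Mφ fun x => hMφ x θ
  have memh : ∀ θ, MemLp (fun x => h x θ) 2 ν := fun θ =>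
    memL2_of_bound ν _ (hhmeas θ) Mh fun x => hMh x θ
  refine ⟨min 1 (ε₀ / a), lt_min one_pos (by positivity), ?_⟩
  intro t ht htle
  have ht1 : t ≤ 1 := le_trans htle (min_le_left _ _)
  have htε : a * t ≤ ε₀ := by
    have := le_trans htle (min_le_right _ _)
    calc a * t ≤ a * (ε₀ / a) := by nlinarith
    _ = ε₀ := by field_simp
  have htκpos : 0 < t ^ κ := Real.rpow_pos_of_pos ht _
  have htκ : t ≤ t ^ κ := by
    calc t = t ^ (1 : ℝ) := (Real.rpow_one t).symm
    _ ≤ t ^ κ := Real.rpow_le_rpow_of_exponent_ge ht ht1 hκ1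
  have memth : ∀ θ, MemLp (fun x => t * h x θ) 2 ν := fun θ =>
    memL2_of_bound ν _ ((hhmeas θ).const_mul t) (|t| * Mh)
      fun x => by rw [abs_mul]; exact mul_le_mul_of_nonneg_left (hMh x θ) (abs_nonneg t)
  -- bound on √∫(t h)²
  have sqrt_tH : ∀ θ ∈ Θ, Real.sqrt (∫ x, (t * h x θ) ^ 2 ∂ν) ≤ t * hsup := by
    intro θ hθ
    have hint : ∫ x, (t * h x θ) ^ 2 ∂ν ≤ (t * hsup) ^ 2 := by
      have := (memth θ).integrable_sq
      calc ∫ x, (t * h x θ) ^ 2 ∂ν ≤ ∫ _x, (t * hsup) ^ 2 ∂ν := by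
            refine integral_mono this (integrable_const _) fun x => ?_
            have h1 := hsb x θ hθ
            have h2 := abs_nonneg (h x θ)
            have hu2 : (h x θ) ^ 2 ≤ hsup ^ 2 := by nlinarith [sq_abs (h x θ)]
            nlinarith [mul_le_mul_of_nonneg_left hu2 (sq_nonneg t)]
      _ = (t * hsup) ^ 2 := by simp
    calc Real.sqrt (∫ x, (t * h x θ) ^ 2 ∂ν) ≤ Real.sqrt ((t * hsup) ^ 2) :=
          Real.sqrt_le_sqrt hint
    _ = t * hsup := Real.sqrt_sq (by positivity)
  -- the c
  set c : ℝ := 2 * hsup * t ^ κ with hcdef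
  have hcpos : 0 < c := by positivity
  -- value at θ₀ is small
  have hφ0ae : (fun x => φ x θ₀) =ᵐ[ν] 0 := by
    have hi : Integrable (fun x => (φ x θ₀) ^ 2) ν := (memφ θ₀).integrable_sq
    have := (integral_eq_zero_iff_of_nonneg (fun x => sq_nonneg (φ x θ₀)) hi).1 hθ₀0
    filter_upwards [this] with x hx
    have : (φ x θ₀) ^ 2 = 0 := hx
    exact pow_eq_zero_iff (by norm_num : (2:ℕ) ≠ 0) |>.1 this
  have hval0 : ∫ x, (φ x θ₀ + t * h x θ₀) ^ 2 ∂ν = ∫ x, (t * h x θ₀) ^ 2 ∂ν := by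
    refine integral_congr_ae ?_
    filter_upwards [hφ0ae] with x hx
    simp [hx]
  -- bddBelow / nonempty facts
  have hlb : ∀ y ∈ (fun θ => ∫ x, (φ x θ + t * h x θ) ^ 2 ∂ν) '' Θ, (0:ℝ) ≤ y := by
    rintro y ⟨θ, hθ, rfl⟩; exact integral_nonneg fun x => sq_nonneg _
  have hbdd : BddBelow ((fun θ => ∫ x, (φ x θ + t * h x θ) ^ 2 ∂ν) '' Θ) := ⟨0, hlb⟩
  have hAne : ((fun θ => ∫ x, (φ x θ + t * h x θ) ^ 2 ∂ν) '' Θ).Nonempty :=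
    hΘne.image _
  -- part 1: √ sInf < c
  have hc1 : Real.sqrt (sInf ((fun θ => ∫ x, (φ x θ + t * h x θ) ^ 2 ∂ν) '' Θ)) < c := by
    have hle : sInf ((fun θ => ∫ x, (φ x θ + t * h x θ) ^ 2 ∂ν) '' Θ) ≤
        ∫ x, (φ x θ₀ + t * h x θ₀) ^ 2 ∂ν :=
      csInf_le hbdd ⟨θ₀, hθ₀Θ, rfl⟩
    have h2 : Real.sqrt (∫ x, (φ x θ₀ + t * h x θ₀) ^ 2 ∂ν) ≤ t * hsup := by
      rw [hval0]; exact sqrt_tH θ₀ hθ₀Θ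
    have h3 := Real.sqrt_le_sqrt hle
    have h4 : t * hsup ≤ t ^ κ * hsup := mul_le_mul_of_nonneg_right htκ hsuppos.le
    have h5 : t ^ κ * hsup < c := by rw [hcdef]; nlinarith
    linarith
  -- part 2: lower bound outside
  have hc2 : ∀ θ ∈ Θ, a * t < Metric.infDist θ Θ₀ →
      c ≤ Real.sqrt (∫ x, (φ x θ + t * h x θ) ^ 2 ∂ν) := by
    intro θ hθ hdist
    have h1 : C * (a * t) ^ κ ≤ Real.sqrt (∫ x, (φ x θ) ^ 2 ∂ν) :=
      hid (a * t) (by positivity) htε θ hθ hdist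
    have h2 : C * (a * t) ^ κ = 3 * hsup * t ^ κ := by
      rw [Real.mul_rpow hapos.le ht.le, haκ]; field_simp
    have h3 : Real.sqrt (∫ x, (φ x θ) ^ 2 ∂ν) - Real.sqrt (∫ x, (t * h x θ) ^ 2 ∂ν) ≤
        Real.sqrt (∫ x, (φ x θ + t * h x θ) ^ 2 ∂ν) :=
      sqrt_L2_rev ν _ _ (memφ θ) (memth θ)
    have h4 := sqrt_tH θ hθ
    have h5 : t * hsup ≤ t ^ κ * hsup := mul_le_mul_of_nonneg_right htκ hsuppos.le
    rw [hcdef]; rw [h2] at h1; linarith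
  refine ⟨⟨c, hc1, hc2⟩, ?_⟩
  -- the equality of infima
  set S := {θ ∈ Θ | Metric.infDist θ Θ₀ ≤ a * t} with hSdef
  have hSsub : S ⊆ Θ := fun θ hθ => hθ.1
  have hθ₀S : θ₀ ∈ S := ⟨hθ₀Θ, by
    rw [Metric.infDist_zero_of_mem hθ₀]; positivity⟩
  have hBne : ((fun θ => ∫ x, (φ x θ + t * h x θ) ^ 2 ∂ν) '' S).Nonempty := ⟨_, θ₀, hθ₀S, rfl⟩
  have hBbdd : BddBelow ((fun θ => ∫ x, (φ x θ + t * h x θ) ^ 2 ∂ν) '' S) :=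
    ⟨0, by rintro y ⟨θ, hθ, rfl⟩; exact integral_nonneg fun x => sq_nonneg _⟩
  refine le_antisymm (csInf_le_csInf hbdd hBne (Set.image_mono hSsub)) ?_
  by_contra hlt
  push_neg at hlt
  have hInflt : sInf ((fun θ => ∫ x, (φ x θ + t * h x θ) ^ 2 ∂ν) '' Θ) <
      min (sInf ((fun θ => ∫ x, (φ x θ + t * h x θ) ^ 2 ∂ν) '' S)) (c ^ 2) := by
    refine lt_min hlt ?_
    exact (Real.sqrt_lt' hcpos).1 hc1
  obtain ⟨y, ⟨θ, hθ, rfl⟩, hy⟩ := (csInf_lt_iff hbdd hAne).1 hInflt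
  have hy1 := lt_of_lt_of_le hy (min_le_left _ _)
  have hy2 := lt_of_lt_of_le hy (min_le_right _ _)
  have hsy : Real.sqrt (∫ x, (φ x θ + t * h x θ) ^ 2 ∂ν) < c := by
    have h0 : (0:ℝ) ≤ ∫ x, (φ x θ + t * h x θ) ^ 2 ∂ν := integral_nonneg fun x => sq_nonneg _
    calc Real.sqrt (∫ x, (φ x θ + t * h x θ) ^ 2 ∂ν) < Real.sqrt (c ^ 2) :=
          Real.sqrt_lt_sqrt h0 hy2
    _ = c := Real.sqrt_sq hcpos.le
  have hθS : θ ∈ S := by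
    refine ⟨hθ, ?_⟩
    by_contra hdd
    push_neg at hdd
    exact absurd (hc2 θ hθ hdd) (not_le.2 hsy)
  have : sInf ((fun θ => ∫ x, (φ x θ + t * h x θ) ^ 2 ∂ν) '' S) ≤
      ∫ x, (φ x θ + t * h x θ) ^ 2 ∂ν := csInf_le hBbdd ⟨θ, hθS, rfl⟩
  linarith
end

section
/- Let ν be a Borel probability measure on ℝ and Θ ⊆ ℝ^d nonempty and compact. Let φ : ℝ × Θ → ℝ be bounded and L²(ν)-continuous in θ with L(φ) = inf_{θ∈Θ} ∫ φ(x,θ)² dν(x) = 0. Then for all bounded h₁, h₂ : ℝ × Θ → ℝ and all t > 0, | L(φ + t·h₁) − L(φ + t·h₂) | ≤ t² · (‖h₁‖∞ + ‖h₂‖∞) · ‖h₁ − h₂‖∞. -/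
open MeasureTheory

/-- Bounded measurable functions are integrable w.r.t. a probability measure. -/
lemma stmt14_int (ν : Measure ℝ) [IsProbabilityMeasure ν] {f : ℝ → ℝ}
    (hf : Measurable f) {C : ℝ} (hC : ∀ x, |f x| ≤ C) : Integrable f ν := by
  refine (integrable_const C).mono' hf.aestronglyMeasurable ?_
  filter_upwards with x
  simpa using hC x

/-- Cauchy–Schwarz for bounded measurable functions on a probability space. -/
lemma stmt14_cs (ν : Measure ℝ) [IsProbabilityMeasure ν] {f g : ℝ → ℝ}
    (hf : Measurable f) (hg : Measurable g) {Cf Cg : ℝ}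
    (hCf : ∀ x, |f x| ≤ Cf) (hCg : ∀ x, |g x| ≤ Cg) :
    ∫ x, f x * g x ∂ν ≤ Real.sqrt (∫ x, f x ^ 2 ∂ν) * Real.sqrt (∫ x, g x ^ 2 ∂ν) := by
  have hCf0 : 0 ≤ Cf := le_trans (abs_nonneg _) (hCf 0)
  have hCg0 : 0 ≤ Cg := le_trans (abs_nonneg _) (hCg 0)
  have hmulint : Integrable (fun x => f x * g x) ν := by
    refine stmt14_int ν (hf.mul hg) (C := Cf * Cg) (fun x => ?_)
    rw [abs_mul]
    exact mul_le_mul (hCf x) (hCg x) (abs_nonneg _) hCf0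
  have habsint : Integrable (fun x => |f x| * |g x|) ν := by
    refine stmt14_int ν (hf.abs.mul hg.abs) (C := Cf * Cg) (fun x => ?_)
    rw [abs_mul, abs_abs, abs_abs]
    exact mul_le_mul (hCf x) (hCg x) (abs_nonneg _) hCf0
  have h1 : ∫ x, f x * g x ∂ν ≤ ∫ x, |f x| * |g x| ∂ν := by
    refine integral_mono hmulint habsint (fun x => ?_)
    rw [← abs_mul]
    exact le_abs_self _
  have hpq : Real.HolderConjugate 2 2 := ⟨by norm_num, by norm_num, by norm_num⟩
  have hmemf : MemLp (fun x => |f x|) (ENNReal.ofReal 2) ν :=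
    (memLp_top_of_bound hf.abs.aestronglyMeasurable Cf
      (Filter.Eventually.of_forall fun x => by simpa using hCf x)).mono_exponent le_top
  have hmemg : MemLp (fun x => |g x|) (ENNReal.ofReal 2) ν :=
    (memLp_top_of_bound hg.abs.aestronglyMeasurable Cg
      (Filter.Eventually.of_forall fun x => by simpa using hCg x)).mono_exponent le_top
  have h2 := integral_mul_le_Lp_mul_Lq_of_nonneg hpq
    (Filter.Eventually.of_forall fun x => abs_nonneg (f x))
    (Filter.Eventually.of_forall fun x => abs_nonneg (g x)) hmemf hmemg
  have hrw : ∀ u : ℝ → ℝ, (∫ x, |u x| ^ (2 : ℝ) ∂ν) = ∫ x, u x ^ 2 ∂ν := by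
    intro u
    refine integral_congr_ae (Filter.Eventually.of_forall fun x => ?_)
    show |u x| ^ (2 : ℝ) = u x ^ 2
    rw [show (2 : ℝ) = ((2 : ℕ) : ℝ) by norm_num, Real.rpow_natCast, sq_abs]
  rw [hrw f, hrw g, ← Real.sqrt_eq_rpow, ← Real.sqrt_eq_rpow] at h2
  exact h1.trans h2

/-- Minkowski-type bound: `√∫(f+g)² ≤ √∫f² + Cg` when `|g| ≤ Cg`. -/
lemma stmt14_minkowski (ν : Measure ℝ) [IsProbabilityMeasure ν] {f g : ℝ → ℝ}
    (hf : Measurable f) (hg : Measurable g) {Cf Cg : ℝ}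
    (hCf : ∀ x, |f x| ≤ Cf) (hCg : ∀ x, |g x| ≤ Cg) :
    Real.sqrt (∫ x, (f x + g x) ^ 2 ∂ν) ≤ Real.sqrt (∫ x, f x ^ 2 ∂ν) + Cg := by
  have hCf0 : 0 ≤ Cf := le_trans (abs_nonneg _) (hCf 0)
  have hCg0 : 0 ≤ Cg := le_trans (abs_nonneg _) (hCg 0)
  have hintf2 : Integrable (fun x => f x ^ 2) ν := by
    refine stmt14_int ν (hf.pow_const 2) (C := Cf ^ 2) (fun x => ?_)
    rw [abs_pow]
    exact pow_le_pow_left₀ (abs_nonneg _) (hCf x) 2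
  have hintg2 : Integrable (fun x => g x ^ 2) ν := by
    refine stmt14_int ν (hg.pow_const 2) (C := Cg ^ 2) (fun x => ?_)
    rw [abs_pow]
    exact pow_le_pow_left₀ (abs_nonneg _) (hCg x) 2
  have hintfg : Integrable (fun x => f x * g x) ν := by
    refine stmt14_int ν (hf.mul hg) (C := Cf * Cg) (fun x => ?_)
    rw [abs_mul]
    exact mul_le_mul (hCf x) (hCg x) (abs_nonneg _) hCf0
  have hexp : (∫ x, (f x + g x) ^ 2 ∂ν)
      = (∫ x, f x ^ 2 ∂ν) + (2 * ∫ x, f x * g x ∂ν + ∫ x, g x ^ 2 ∂ν) := by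
    calc (∫ x, (f x + g x) ^ 2 ∂ν)
        = ∫ x, (f x ^ 2 + (2 * (f x * g x) + g x ^ 2)) ∂ν :=
          integral_congr_ae (Filter.Eventually.of_forall fun x => by ring)
      _ = (∫ x, f x ^ 2 ∂ν) + ∫ x, (2 * (f x * g x) + g x ^ 2) ∂ν :=
          integral_add hintf2 ((hintfg.const_mul 2).add hintg2)
      _ = (∫ x, f x ^ 2 ∂ν) + ((∫ x, 2 * (f x * g x) ∂ν) + ∫ x, g x ^ 2 ∂ν) := by
          rw [integral_add (hintfg.const_mul 2) hintg2]
      _ = (∫ x, f x ^ 2 ∂ν) + (2 * ∫ x, f x * g x ∂ν + ∫ x, g x ^ 2 ∂ν) := by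
          rw [integral_const_mul]
  have hcs := stmt14_cs ν hf hg hCf hCg
  have hg2 : (∫ x, g x ^ 2 ∂ν) ≤ Cg ^ 2 := by
    calc (∫ x, g x ^ 2 ∂ν) ≤ ∫ _, Cg ^ 2 ∂ν := by
          refine integral_mono hintg2 (integrable_const _) (fun x => ?_)
          rw [← sq_abs]
          exact pow_le_pow_left₀ (abs_nonneg _) (hCg x) 2
      _ = Cg ^ 2 := by simp
  have hsqrtg : Real.sqrt (∫ x, g x ^ 2 ∂ν) ≤ Cg := by
    calc Real.sqrt (∫ x, g x ^ 2 ∂ν) ≤ Real.sqrt (Cg ^ 2) := Real.sqrt_le_sqrt hg2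
      _ = Cg := Real.sqrt_sq hCg0
  have hf2nn : 0 ≤ ∫ x, f x ^ 2 ∂ν := integral_nonneg fun x => sq_nonneg _
  have hsq : Real.sqrt (∫ x, f x ^ 2 ∂ν) ^ 2 = ∫ x, f x ^ 2 ∂ν := Real.sq_sqrt hf2nn
  have hle : (∫ x, (f x + g x) ^ 2 ∂ν) ≤ (Real.sqrt (∫ x, f x ^ 2 ∂ν) + Cg) ^ 2 := by
    have hgnn : 0 ≤ Real.sqrt (∫ x, g x ^ 2 ∂ν) := Real.sqrt_nonneg _
    have hfnn : 0 ≤ Real.sqrt (∫ x, f x ^ 2 ∂ν) := Real.sqrt_nonneg _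
    nlinarith [hcs, hg2, hsqrtg, mul_le_mul_of_nonneg_left hsqrtg hfnn]
  calc Real.sqrt (∫ x, (f x + g x) ^ 2 ∂ν)
      ≤ Real.sqrt ((Real.sqrt (∫ x, f x ^ 2 ∂ν) + Cg) ^ 2) := Real.sqrt_le_sqrt hle
    _ = Real.sqrt (∫ x, f x ^ 2 ∂ν) + Cg :=
        Real.sqrt_sq (add_nonneg (Real.sqrt_nonneg _) hCg0)

/-- quadratic comparison under the null. If
`L(φ) = inf_{θ∈Θ} ∫ φ(x,θ)² dν(x) = 0`, then for bounded directions `h₁, h₂` and `t > 0`,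
`|L(φ + t·h₁) − L(φ + t·h₂)| ≤ t²(‖h₁‖∞ + ‖h₂‖∞)‖h₁ − h₂‖∞`. -/
theorem stmt_14
    (d : ℕ) (Θ : Set (EuclideanSpace ℝ (Fin d)))
    (hΘne : Θ.Nonempty) (hΘcomp : IsCompact Θ)
    (ν : Measure ℝ) [IsProbabilityMeasure ν]
    (φ : ℝ → EuclideanSpace ℝ (Fin d) → ℝ)
    (hφmeas : ∀ θ, Measurable fun x => φ x θ)
    (hφb : ∃ M, ∀ x θ, |φ x θ| ≤ M)
    (hφc : ∀ θ₀ ∈ Θ, ∀ ε > 0, ∃ δ > 0, ∀ θ ∈ Θ, ‖θ - θ₀‖ < δ →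
      ∫ x, (φ x θ - φ x θ₀) ^ 2 ∂ν < ε)
    -- the null: L(φ) = 0
    (hL0 : sInf ((fun θ => ∫ x, (φ x θ) ^ 2 ∂ν) '' Θ) = 0)
    (h₁ h₂ : ℝ → EuclideanSpace ℝ (Fin d) → ℝ)
    (hmeas₁ : ∀ θ, Measurable fun x => h₁ x θ)
    (hmeas₂ : ∀ θ, Measurable fun x => h₂ x θ)
    -- bounds playing the role of ‖h₁‖∞, ‖h₂‖∞ and ‖h₁ − h₂‖∞
    (C₁ C₂ Cd : ℝ)
    (hb₁ : ∀ x θ, |h₁ x θ| ≤ C₁)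
    (hb₂ : ∀ x θ, |h₂ x θ| ≤ C₂)
    (hbd : ∀ x θ, |h₁ x θ - h₂ x θ| ≤ Cd)
    (t : ℝ) (ht : 0 < t) :
    |sInf ((fun θ => ∫ x, (φ x θ + t * h₁ x θ) ^ 2 ∂ν) '' Θ) -
        sInf ((fun θ => ∫ x, (φ x θ + t * h₂ x θ) ^ 2 ∂ν) '' Θ)| ≤
      t ^ 2 * (C₁ + C₂) * Cd := by
  obtain ⟨M, hM⟩ := hφb
  obtain ⟨θ₀, hθ₀⟩ := hΘne
  have hC₁0 : 0 ≤ C₁ := le_trans (abs_nonneg _) (hb₁ 0 θ₀)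
  have hC₂0 : 0 ≤ C₂ := le_trans (abs_nonneg _) (hb₂ 0 θ₀)
  have hCd0 : 0 ≤ Cd := le_trans (abs_nonneg _) (hbd 0 θ₀)
  -- the main comparison lemma on square roots of infima
  have main : ∀ (g₁ g₂ : ℝ → EuclideanSpace ℝ (Fin d) → ℝ),
      (∀ θ, Measurable fun x => g₁ x θ) → (∀ θ, Measurable fun x => g₂ x θ) →
      ∀ B₂ D : ℝ, (∀ x θ, |g₂ x θ| ≤ B₂) → (∀ x θ, |g₁ x θ - g₂ x θ| ≤ D) →
      Real.sqrt (sInf ((fun θ => ∫ x, (φ x θ + t * g₁ x θ) ^ 2 ∂ν) '' Θ)) ≤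
        Real.sqrt (sInf ((fun θ => ∫ x, (φ x θ + t * g₂ x θ) ^ 2 ∂ν) '' Θ)) + t * D := by
    intro g₁ g₂ hm₁ hm₂ B₂ D hB₂ hD
    set F₁ : EuclideanSpace ℝ (Fin d) → ℝ := fun θ => ∫ x, (φ x θ + t * g₁ x θ) ^ 2 ∂ν with hF₁
    set F₂ : EuclideanSpace ℝ (Fin d) → ℝ := fun θ => ∫ x, (φ x θ + t * g₂ x θ) ^ 2 ∂ν with hF₂
    have hpt : ∀ θ ∈ Θ, Real.sqrt (F₁ θ) ≤ Real.sqrt (F₂ θ) + t * D := by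
      intro θ _
      have h := stmt14_minkowski ν (f := fun x => φ x θ + t * g₂ x θ)
        (g := fun x => t * (g₁ x θ - g₂ x θ))
        ((hφmeas θ).add ((hm₂ θ).const_mul t))
        (((hm₁ θ).sub (hm₂ θ)).const_mul t)
        (Cf := M + t * B₂) (Cg := t * D)
        (fun x => by
          calc |φ x θ + t * g₂ x θ| ≤ |φ x θ| + |t * g₂ x θ| := abs_add_le _ _
            _ ≤ M + t * B₂ := by
                rw [abs_mul, abs_of_pos ht]
                exact add_le_add (hM x θ) (mul_le_mul_of_nonneg_left (hB₂ x θ) ht.le))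
        (fun x => by
          rw [abs_mul, abs_of_pos ht]
          exact mul_le_mul_of_nonneg_left (hD x θ) ht.le)
      have heq : F₁ θ = ∫ x, (φ x θ + t * g₂ x θ + t * (g₁ x θ - g₂ x θ)) ^ 2 ∂ν :=
        integral_congr_ae (Filter.Eventually.of_forall fun x => by ring)
      rw [heq]
      exact h
    have hne₂ : ((fun θ => F₂ θ) '' Θ).Nonempty := ⟨F₂ θ₀, ⟨θ₀, hθ₀, rfl⟩⟩
    have hnn : ∀ y ∈ (fun θ => F₂ θ) '' Θ, 0 ≤ y := by
      rintro y ⟨θ, _, rfl⟩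
      exact integral_nonneg fun x => sq_nonneg _
    have hA₂nn : 0 ≤ sInf ((fun θ => F₂ θ) '' Θ) := Real.sInf_nonneg hnn
    refine le_of_forall_pos_le_add fun ε hε => ?_
    obtain ⟨y, ⟨θ, hθ, rfl⟩, hy⟩ := Real.lt_sInf_add_pos hne₂ (mul_pos hε hε)
    have h1 : Real.sqrt (sInf ((fun θ => F₁ θ) '' Θ)) ≤ Real.sqrt (F₁ θ) := by
      refine Real.sqrt_le_sqrt (csInf_le ⟨0, ?_⟩ ⟨θ, hθ, rfl⟩)
      rintro y ⟨θ', _, rfl⟩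
      exact integral_nonneg fun x => sq_nonneg _
    have h2 : Real.sqrt (F₂ θ) ≤ Real.sqrt (sInf ((fun θ => F₂ θ) '' Θ)) + ε := by
      have hle : F₂ θ ≤ (Real.sqrt (sInf ((fun θ => F₂ θ) '' Θ)) + ε) ^ 2 := by
        have := Real.sq_sqrt hA₂nn
        nlinarith [Real.sqrt_nonneg (sInf ((fun θ => F₂ θ) '' Θ))]
      calc Real.sqrt (F₂ θ) ≤ Real.sqrt ((Real.sqrt (sInf ((fun θ => F₂ θ) '' Θ)) + ε) ^ 2) :=
            Real.sqrt_le_sqrt hle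
        _ = _ := Real.sqrt_sq (add_nonneg (Real.sqrt_nonneg _) hε.le)
    calc Real.sqrt (sInf ((fun θ => F₁ θ) '' Θ)) ≤ Real.sqrt (F₁ θ) := h1
      _ ≤ Real.sqrt (F₂ θ) + t * D := hpt θ hθ
      _ ≤ Real.sqrt (sInf ((fun θ => F₂ θ) '' Θ)) + ε + t * D := by linarith
      _ = Real.sqrt (sInf ((fun θ => F₂ θ) '' Θ)) + t * D + ε := by ring
  set A₁ := sInf ((fun θ => ∫ x, (φ x θ + t * h₁ x θ) ^ 2 ∂ν) '' Θ) with hA₁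
  set A₂ := sInf ((fun θ => ∫ x, (φ x θ + t * h₂ x θ) ^ 2 ∂ν) '' Θ) with hA₂
  have hA₁nn : 0 ≤ A₁ := Real.sInf_nonneg (by
    rintro y ⟨θ, _, rfl⟩; exact integral_nonneg fun x => sq_nonneg _)
  have hA₂nn : 0 ≤ A₂ := Real.sInf_nonneg (by
    rintro y ⟨θ, _, rfl⟩; exact integral_nonneg fun x => sq_nonneg _)
  -- compare A₁, A₂
  have h12 : Real.sqrt A₁ ≤ Real.sqrt A₂ + t * Cd :=
    main h₁ h₂ hmeas₁ hmeas₂ C₂ Cd hb₂ hbd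
  have h21 : Real.sqrt A₂ ≤ Real.sqrt A₁ + t * Cd := by
    have := main h₂ h₁ hmeas₂ hmeas₁ C₁ Cd hb₁
      (fun x θ => by rw [abs_sub_comm]; exact hbd x θ)
    exact this
  -- bound each √Aᵢ by t * Cᵢ via the null
  have hbound : ∀ (g : ℝ → EuclideanSpace ℝ (Fin d) → ℝ),
      (∀ θ, Measurable fun x => g x θ) → ∀ C : ℝ, (∀ x θ, |g x θ| ≤ C) →
      Real.sqrt (sInf ((fun θ => ∫ x, (φ x θ + t * g x θ) ^ 2 ∂ν) '' Θ)) ≤ t * C := by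
    intro g hm C hC
    have := main g (fun _ _ => (0:ℝ)) hm (fun _ => measurable_const) 0 C
      (fun x θ => by simp) (fun x θ => by simpa using hC x θ)
    simpa [hL0, Real.sqrt_zero] using this
  have hb1 : Real.sqrt A₁ ≤ t * C₁ := hbound h₁ hmeas₁ C₁ hb₁
  have hb2 : Real.sqrt A₂ ≤ t * C₂ := hbound h₂ hmeas₂ C₂ hb₂
  have hs1 : Real.sqrt A₁ ^ 2 = A₁ := Real.sq_sqrt hA₁nn
  have hs2 : Real.sqrt A₂ ^ 2 = A₂ := Real.sq_sqrt hA₂nn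
  have hd : |Real.sqrt A₁ - Real.sqrt A₂| ≤ t * Cd := abs_sub_le_iff.2 ⟨by linarith, by linarith⟩
  have hfactor : A₁ - A₂ = (Real.sqrt A₁ - Real.sqrt A₂) * (Real.sqrt A₁ + Real.sqrt A₂) := by
    nlinarith [hs1, hs2]
  rw [hfactor, abs_mul]
  have hsumnn : 0 ≤ Real.sqrt A₁ + Real.sqrt A₂ :=
    add_nonneg (Real.sqrt_nonneg _) (Real.sqrt_nonneg _)
  calc |Real.sqrt A₁ - Real.sqrt A₂| * |Real.sqrt A₁ + Real.sqrt A₂|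
      ≤ (t * Cd) * (t * C₁ + t * C₂) := by
        rw [abs_of_nonneg hsumnn]
        exact mul_le_mul hd (by linarith) hsumnn (by positivity)
    _ = t ^ 2 * (C₁ + C₂) * Cd := by ring
end

section
/- For k = 1,…,K let Θ_k ⊆ ℝ^{d_k} be nonempty and compact, let ν be a Borel probability measure on ℝ, and let φ_k, h_k : ℝ × Θ_k → ℝ be bounded functions that are L²(ν)-continuous in θ_k. Write Θ = Θ₁ × ⋯ × Θ_K, define L(ψ₁,…,ψ_K) = inf_{(θ₁,…,θ_K)∈Θ} ∫_ℝ ∑_{k=1}^K ψ_k(x,θ_k)² dν(x), and let Θ₀(φ) = argmin_{θ∈Θ} ∫_ℝ ∑_{k=1}^K φ_k(x,θ_k)² dν(x), which is nonempty. Then for every sequence of positive reals t_n → 0 and every sequences of bounded functions h_{n,k} : ℝ × Θ_k → ℝ with max_k ‖h_{n,k} − h_k‖∞ → 0, lim_{n→∞} ( L(φ₁ + t_n h_{n,1}, …, φ_K + t_n h_{n,K}) − L(φ₁,…,φ_K) )/t_n = 2 · inf_{(θ₁,…,θ_K)∈Θ₀(φ)} ∫_ℝ ∑_{k=1}^K φ_k(x,θ_k)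 h_k(x,θ_k) dν(x). -/
open MeasureTheory Filter Topology

lemma aux_integrable (ν : Measure ℝ) [IsProbabilityMeasure ν] (f : ℝ → ℝ) (hf : Measurable f)
    (M : ℝ) (hb : ∀ x, |f x| ≤ M) : Integrable f ν :=
  (integrable_const M).mono' hf.aestronglyMeasurable (ae_of_all _ (by simpa using hb))

lemma aux_abs_integral_le (ν : Measure ℝ) [IsProbabilityMeasure ν] (f : ℝ → ℝ)
    (hf : Measurable f) (M : ℝ) (hb : ∀ x, |f x| ≤ M) : |∫ x, f x ∂ν| ≤ M := by
  have h1 : ‖∫ x, f x ∂ν‖ ≤ ∫ x, M ∂ν :=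
    norm_integral_le_of_norm_le (integrable_const M) (ae_of_all _ (by simpa using hb))
  simpa [Real.norm_eq_abs] using h1

lemma aux_small_mul (ν : Measure ℝ) [IsProbabilityMeasure ν] (f g : ℝ → ℝ)
    (hf : Measurable f) (hg : Measurable g) (M M' : ℝ) (hM : 0 ≤ M)
    (hbf : ∀ x, |f x| ≤ M) (hbg : ∀ x, |g x| ≤ M') (ε : ℝ) (hε : 0 < ε)
    (hg2 : ∫ x, g x ^ 2 ∂ν < ε ^ 2) : |∫ x, f x * g x ∂ν| ≤ M * ε := by
  have hg2int : Integrable (fun x => g x ^ 2) ν := by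
    refine aux_integrable ν _ (hg.pow_const 2) (M' ^ 2) fun x => ?_
    have := hbg x
    have := abs_nonneg (g x)
    rw [abs_of_nonneg (sq_nonneg (g x))]
    nlinarith [sq_abs (g x)]
  have hint : Integrable (fun x => M / (2 * ε) * g x ^ 2 + M * ε / 2) ν :=
    (hg2int.const_mul _).add (integrable_const _)
  have key : ∀ x, |f x * g x| ≤ M / (2 * ε) * g x ^ 2 + M * ε / 2 := by
    intro x
    have h1 : |f x * g x| = |f x| * |g x| := abs_mul _ _
    have h2 : |g x| ≤ g x ^ 2 / (2 * ε) + ε / 2 := by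
      have he : g x ^ 2 / (2 * ε) + ε / 2 = (g x ^ 2 + ε ^ 2) / (2 * ε) := by
        field_simp
      rw [he, le_div_iff₀ (by positivity)]
      nlinarith [sq_nonneg (|g x| - ε), sq_abs (g x)]
    have h3 : |f x| * |g x| ≤ M * (g x ^ 2 / (2 * ε) + ε / 2) := by
      have := hbf x
      have h4 : (0:ℝ) ≤ g x ^ 2 / (2 * ε) + ε / 2 :=
        le_trans (abs_nonneg _) h2
      exact mul_le_mul (hbf x) h2 (abs_nonneg _) hM
    rw [h1]; calc |f x| * |g x| ≤ M * (g x ^ 2 / (2 * ε) + ε / 2) := h3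
      _ = M / (2 * ε) * g x ^ 2 + M * ε / 2 := by ring
  have h5 : ‖∫ x, f x * g x ∂ν‖ ≤ ∫ x, (M / (2 * ε) * g x ^ 2 + M * ε / 2) ∂ν :=
    norm_integral_le_of_norm_le hint (ae_of_all _ fun x => by
      rw [Real.norm_eq_abs]; exact key x)
  have h6 : ∫ x, (M / (2 * ε) * g x ^ 2 + M * ε / 2) ∂ν
      = M / (2 * ε) * ∫ x, g x ^ 2 ∂ν + M * ε / 2 := by
    rw [integral_add (hg2int.const_mul _) (integrable_const _), integral_const_mul,
      integral_const]
    simp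
  have h7 : M / (2 * ε) * ∫ x, g x ^ 2 ∂ν ≤ M / (2 * ε) * ε ^ 2 :=
    mul_le_mul_of_nonneg_left hg2.le (by positivity)
  have h8 : M / (2 * ε) * ε ^ 2 = M * ε / 2 := by field_simp
  rw [Real.norm_eq_abs] at h5
  linarith

lemma aux_contOn {E : Type*} [NormedAddCommGroup E] (ν : Measure ℝ) [IsProbabilityMeasure ν]
    (s : Set E) (f g : ℝ → E → ℝ)
    (hfm : ∀ θ, Measurable fun x => f x θ) (hgm : ∀ θ, Measurable fun x => g x θ)
    (M : ℝ) (hM : 0 ≤ M) (hbf : ∀ x θ, |f x θ| ≤ M) (hbg : ∀ x θ, |g x θ| ≤ M)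
    (hfc : ∀ θ₀ ∈ s, ∀ ε > 0, ∃ δ > 0, ∀ θ ∈ s, ‖θ - θ₀‖ < δ →
      ∫ x, (f x θ - f x θ₀) ^ 2 ∂ν < ε)
    (hgc : ∀ θ₀ ∈ s, ∀ ε > 0, ∃ δ > 0, ∀ θ ∈ s, ‖θ - θ₀‖ < δ →
      ∫ x, (g x θ - g x θ₀) ^ 2 ∂ν < ε) :
    ContinuousOn (fun θ => ∫ x, f x θ * g x θ ∂ν) s := by
  rw [Metric.continuousOn_iff]
  intro θ₀ hθ₀ ε hε
  set ε₁ := ε / (2 * (M + 1)) with hε₁def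
  have hε₁ : 0 < ε₁ := by positivity
  obtain ⟨δ₁, hδ₁, hf1⟩ := hfc θ₀ hθ₀ (ε₁ ^ 2) (by positivity)
  obtain ⟨δ₂, hδ₂, hg1⟩ := hgc θ₀ hθ₀ (ε₁ ^ 2) (by positivity)
  refine ⟨min δ₁ δ₂, lt_min hδ₁ hδ₂, fun θ hθ hd => ?_⟩
  have hd' : ‖θ - θ₀‖ < min δ₁ δ₂ := by rwa [← dist_eq_norm]
  have hA := hf1 θ hθ (lt_of_lt_of_le hd' (min_le_left _ _))
  have hB := hg1 θ hθ (lt_of_lt_of_le hd' (min_le_right _ _))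
  -- f θ g θ - f θ₀ g θ₀ = (f θ - f θ₀) * g θ + f θ₀ * (g θ - g θ₀)
  have int1 : Integrable (fun x => f x θ * g x θ) ν := by
    refine aux_integrable ν _ ((hfm θ).mul (hgm θ)) (M * M) fun x => ?_
    rw [abs_mul]; exact mul_le_mul (hbf x θ) (hbg x θ) (abs_nonneg _) hM
  have int2 : Integrable (fun x => f x θ₀ * g x θ₀) ν := by
    refine aux_integrable ν _ ((hfm θ₀).mul (hgm θ₀)) (M * M) fun x => ?_
    rw [abs_mul]; exact mul_le_mul (hbf x θ₀) (hbg x θ₀) (abs_nonneg _) hM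
  rw [Real.dist_eq, ← integral_sub int1 int2]
  have hsplit : ∀ x : ℝ, f x θ * g x θ - f x θ₀ * g x θ₀
      = g x θ * (f x θ - f x θ₀) + f x θ₀ * (g x θ - g x θ₀) := fun x => by ring
  simp_rw [hsplit]
  have intA : Integrable (fun x => g x θ * (f x θ - f x θ₀)) ν := by
    refine aux_integrable ν _ ((hgm θ).mul ((hfm θ).sub (hfm θ₀))) (M * (2 * M)) fun x => ?_
    rw [abs_mul]
    refine mul_le_mul (hbg x θ) ?_ (abs_nonneg _) hM
    calc |f x θ - f x θ₀| ≤ |f x θ| + |f x θ₀| := abs_sub _ _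
      _ ≤ 2 * M := by have := hbf x θ; have := hbf x θ₀; linarith
  have intB : Integrable (fun x => f x θ₀ * (g x θ - g x θ₀)) ν := by
    refine aux_integrable ν _ ((hfm θ₀).mul ((hgm θ).sub (hgm θ₀))) (M * (2 * M)) fun x => ?_
    rw [abs_mul]
    refine mul_le_mul (hbf x θ₀) ?_ (abs_nonneg _) hM
    calc |g x θ - g x θ₀| ≤ |g x θ| + |g x θ₀| := abs_sub _ _
      _ ≤ 2 * M := by have := hbg x θ; have := hbg x θ₀; linarith
  rw [integral_add intA intB]
  have e1 : |∫ x, g x θ * (f x θ - f x θ₀) ∂ν| ≤ M * ε₁ :=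
    aux_small_mul ν _ _ (hgm θ) ((hfm θ).sub (hfm θ₀)) M (2 * M) hM (hbg · θ)
      (fun x => calc |f x θ - f x θ₀| ≤ |f x θ| + |f x θ₀| := abs_sub _ _
        _ ≤ 2 * M := by have := hbf x θ; have := hbf x θ₀; linarith) ε₁ hε₁ hA
  have e2 : |∫ x, f x θ₀ * (g x θ - g x θ₀) ∂ν| ≤ M * ε₁ :=
    aux_small_mul ν _ _ (hfm θ₀) ((hgm θ).sub (hgm θ₀)) M (2 * M) hM (hbf · θ₀)
      (fun x => calc |g x θ - g x θ₀| ≤ |g x θ| + |g x θ₀| := abs_sub _ _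
        _ ≤ 2 * M := by have := hbg x θ; have := hbg x θ₀; linarith) ε₁ hε₁ hB
  have : 2 * (M * ε₁) < ε := by
    have hlt : M / (M + 1) < 1 := by rw [div_lt_one (by positivity)]; linarith
    calc 2 * (M * ε₁) = M / (M + 1) * ε := by rw [hε₁def]; field_simp
      _ < 1 * ε := mul_lt_mul_of_pos_right hlt hε
      _ = ε := one_mul ε
  calc |∫ x, g x θ * (f x θ - f x θ₀) ∂ν + ∫ x, f x θ₀ * (g x θ - g x θ₀) ∂ν|
      ≤ |∫ x, g x θ * (f x θ - f x θ₀) ∂ν| + |∫ x, f x θ₀ * (g x θ - g x θ₀) ∂ν| := abs_add_le _ _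
    _ ≤ M * ε₁ + M * ε₁ := add_le_add e1 e2
    _ = 2 * (M * ε₁) := by ring
    _ < ε := this

set_option maxHeartbeats 1000000 in
/-- Lemma 8 of the paper: first-order Hadamard directional
derivative of the multiple-samples criterion map
`L(ψ₁,…,ψ_K) = inf_{θ∈Θ₁×⋯×Θ_K} ∫ ∑_k ψ_k(x,θ_k)² dν(x)`. -/
theorem stmt_18
    (K : ℕ) (hK : 1 ≤ K) (dk : Fin K → ℕ)
    (Θ : ∀ k : Fin K, Set (EuclideanSpace ℝ (Fin (dk k))))
    (hΘne : ∀ k, (Θ k).Nonempty) (hΘcomp : ∀ k, IsCompact (Θ k))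
    (ν : Measure ℝ) [IsProbabilityMeasure ν]
    (φ h : ∀ k : Fin K, ℝ → EuclideanSpace ℝ (Fin (dk k)) → ℝ)
    (hφmeas : ∀ k θk, Measurable fun x => φ k x θk)
    (hhmeas : ∀ k θk, Measurable fun x => h k x θk)
    -- each φ k and h k is bounded
    (hφb : ∀ k, ∃ M, ∀ x θk, |φ k x θk| ≤ M)
    (hhb : ∀ k, ∃ M, ∀ x θk, |h k x θk| ≤ M)
    -- each φ k and h k is L²(ν)-continuous in θ_k
    (hφc : ∀ k, ∀ θk₀ ∈ Θ k, ∀ ε > 0, ∃ δ > 0, ∀ θk ∈ Θ k, ‖θk - θk₀‖ < δ →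
      ∫ x, (φ k x θk - φ k x θk₀) ^ 2 ∂ν < ε)
    (hhc : ∀ k, ∀ θk₀ ∈ Θ k, ∀ ε > 0, ∃ δ > 0, ∀ θk ∈ Θ k, ‖θk - θk₀‖ < δ →
      ∫ x, (h k x θk - h k x θk₀) ^ 2 ∂ν < ε)
    -- the argmin set Θ₀(φ) over the product parameter set
    (Θ₀ : Set (∀ k : Fin K, EuclideanSpace ℝ (Fin (dk k))))
    (hΘ₀def : Θ₀ = {θ | (∀ k, θ k ∈ Θ k) ∧ ∀ ϑ : ∀ k : Fin K, EuclideanSpace ℝ (Fin (dk k)), (∀ k, ϑ k ∈ Θ k) →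
      ∫ x, ∑ k, (φ k x (θ k)) ^ 2 ∂ν ≤ ∫ x, ∑ k, (φ k x (ϑ k)) ^ 2 ∂ν})
    -- sequences t_n ↓ 0 and bounded h_{n,k} with max_k ‖h_{n,k} − h_k‖∞ → 0
    (t : ℕ → ℝ) (htpos : ∀ n, 0 < t n) (ht0 : Tendsto t atTop (𝓝 0))
    (hn : ℕ → ∀ k : Fin K, ℝ → EuclideanSpace ℝ (Fin (dk k)) → ℝ)
    (hnmeas : ∀ n k θk, Measurable fun x => hn n k x θk)
    (hnb : ∀ n, ∃ M, ∀ k x θk, |hn n k x θk| ≤ M)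
    (hnconv : ∀ ε > 0, ∃ N, ∀ n ≥ N, ∀ k x θk, |hn n k x θk - h k x θk| ≤ ε) :
    Θ₀.Nonempty ∧
    Tendsto
      (fun n =>
        (sInf ((fun θ : ∀ k : Fin K, EuclideanSpace ℝ (Fin (dk k)) =>
            ∫ x, ∑ k, (φ k x (θ k) + t n * hn n k x (θ k)) ^ 2 ∂ν) ''
          {θ | ∀ k, θ k ∈ Θ k}) -
         sInf ((fun θ : ∀ k : Fin K, EuclideanSpace ℝ (Fin (dk k)) =>
            ∫ x, ∑ k, (φ k x (θ k)) ^ 2 ∂ν) '' {θ | ∀ k, θ k ∈ Θ k})) / t n)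
      atTop
      (𝓝 (2 * sInf ((fun θ : ∀ k : Fin K, EuclideanSpace ℝ (Fin (dk k)) =>
        ∫ x, ∑ k, φ k x (θ k) * h k x (θ k) ∂ν) '' Θ₀))) := by
  classical
  -- a common bound M ≥ 1 for all φ k and h k
  obtain ⟨M, hM1, hMφ, hMh⟩ : ∃ M : ℝ, 1 ≤ M ∧ (∀ k x θk, |φ k x θk| ≤ M) ∧
      (∀ k x θk, |h k x θk| ≤ M) := by
    choose Mφ hMφ using hφb
    choose Mh hMh using hhb
    refine ⟨1 + ∑ k, (|Mφ k| + |Mh k|), ?_, ?_, ?_⟩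
    · have : (0:ℝ) ≤ ∑ k, (|Mφ k| + |Mh k|) :=
        Finset.sum_nonneg (fun k _ => by positivity)
      linarith
    · intro k x θk
      have h1 : |Mφ k| + |Mh k| ≤ ∑ j, (|Mφ j| + |Mh j|) :=
        Finset.single_le_sum (f := fun j => |Mφ j| + |Mh j|)
          (fun j _ => by positivity) (Finset.mem_univ k)
      have h2 : |φ k x θk| ≤ |Mφ k| := le_trans (hMφ k x θk) (le_abs_self _)
      have h3 : (0:ℝ) ≤ |Mh k| := abs_nonneg _
      linarith
    · intro k x θk
      have h1 : |Mφ k| + |Mh k| ≤ ∑ j, (|Mφ j| + |Mh j|) :=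
        Finset.single_le_sum (f := fun j => |Mφ j| + |Mh j|)
          (fun j _ => by positivity) (Finset.mem_univ k)
      have h2 : |h k x θk| ≤ |Mh k| := le_trans (hMh k x θk) (le_abs_self _)
      have h3 : (0:ℝ) ≤ |Mφ k| := abs_nonneg _
      linarith
  have hM0 : (0:ℝ) < M := lt_of_lt_of_le one_pos hM1
  set S : Set (∀ k : Fin K, EuclideanSpace ℝ (Fin (dk k))) := {θ | ∀ k, θ k ∈ Θ k} with hSdef
  have hScomp : IsCompact S := by
    have hS : S = Set.pi Set.univ Θ := by ext θ; simp [hSdef, Set.mem_pi]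
    rw [hS]; exact isCompact_univ_pi hΘcomp
  have hSclosed : IsClosed S := hScomp.isClosed
  have hSne : S.Nonempty := ⟨fun k => (hΘne k).choose, fun k => (hΘne k).choose_spec⟩
  -- generic integrability of bounded measurable sums
  have intsum : ∀ f : Fin K → ℝ → ℝ, (∀ k, Measurable (f k)) →
      (∀ k, ∃ C, ∀ x, |f k x| ≤ C) → Integrable (fun x => ∑ k, f k x) ν := by
    intro f hm hb
    exact integrable_finset_sum _ fun k _ =>
      aux_integrable ν _ (hm k) (hb k).choose (hb k).choose_spec
  set F : (∀ k : Fin K, EuclideanSpace ℝ (Fin (dk k))) → ℝ :=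
    fun θ => ∫ x, ∑ k, (φ k x (θ k)) ^ 2 ∂ν with hFdef
  set D : (∀ k : Fin K, EuclideanSpace ℝ (Fin (dk k))) → ℝ :=
    fun θ => ∫ x, ∑ k, φ k x (θ k) * h k x (θ k) ∂ν with hDdef
  -- integrability facts
  have intφ2 : ∀ k θk, Integrable (fun x => (φ k x θk) ^ 2) ν := by
    intro k θk
    refine aux_integrable ν _ ((hφmeas k θk).pow_const 2) (M ^ 2) fun x => ?_
    rw [abs_of_nonneg (sq_nonneg _)]
    nlinarith [hMφ k x θk, abs_nonneg (φ k x θk), sq_abs (φ k x θk)]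
  -- continuity of F on S
  have hFkcont : ∀ k : Fin K, ContinuousOn (fun θk => ∫ x, (φ k x θk) ^ 2 ∂ν) (Θ k) := by
    intro k
    have := aux_contOn ν (Θ k) (φ k) (φ k) (hφmeas k) (hφmeas k) M hM0.le
      (fun x θk => hMφ k x θk) (fun x θk => hMφ k x θk) (hφc k) (hφc k)
    simpa only [← pow_two] using this
  have hFcont : ContinuousOn F S := by
    have hcont : ContinuousOn
        (fun θ : ∀ k : Fin K, EuclideanSpace ℝ (Fin (dk k)) =>
          ∑ k, ∫ x, (φ k x (θ k)) ^ 2 ∂ν) S := by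
      refine continuousOn_finset_sum _ fun k _ => ?_
      exact (hFkcont k).comp (continuous_apply k).continuousOn (fun θ hθ => hθ k)
    refine hcont.congr fun θ _ => ?_
    exact integral_finset_sum _ fun k _ => intφ2 k (θ k)
  -- continuity of D on S
  have hDcont : ContinuousOn D S := by
    have hDkcont : ∀ k : Fin K,
        ContinuousOn (fun θk => ∫ x, φ k x θk * h k x θk ∂ν) (Θ k) := fun k =>
      aux_contOn ν (Θ k) (φ k) (h k) (hφmeas k) (hhmeas k) M hM0.le
        (fun x θk => hMφ k x θk) (fun x θk => hMh k x θk) (hφc k) (hhc k)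
    have hcont : ContinuousOn
        (fun θ : ∀ k : Fin K, EuclideanSpace ℝ (Fin (dk k)) =>
          ∑ k, ∫ x, φ k x (θ k) * h k x (θ k) ∂ν) S := by
      refine continuousOn_finset_sum _ fun k _ => ?_
      exact (hDkcont k).comp (continuous_apply k).continuousOn (fun θ hθ => hθ k)
    refine hcont.congr fun θ _ => ?_
    refine integral_finset_sum _ fun k _ => ?_
    refine aux_integrable ν _ ((hφmeas k (θ k)).mul (hhmeas k (θ k))) (M * M) fun x => ?_
    rw [abs_mul]
    exact mul_le_mul (hMφ k x (θ k)) (hMh k x (θ k)) (abs_nonneg _) hM0.le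
  -- the minimizer of F on S
  obtain ⟨θs, hθsS, hθsmin⟩ := hScomp.exists_isMinOn hSne hFcont
  set L : ℝ := F θs with hLdef
  have hθsmin' : ∀ ϑ ∈ S, L ≤ F ϑ := fun ϑ hϑ => isMinOn_iff.mp hθsmin ϑ hϑ
  have hLinf : sInf (F '' S) = L :=
    IsLeast.csInf_eq ⟨⟨θs, hθsS, rfl⟩, by rintro z ⟨θ, hθ, rfl⟩; exact hθsmin' θ hθ⟩
  -- Θ₀ membership
  have hmemΘ₀ : ∀ θ, θ ∈ Θ₀ ↔ θ ∈ S ∧ ∀ ϑ ∈ S, F θ ≤ F ϑ := by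
    intro θ; rw [hΘ₀def]; exact Iff.rfl
  have hΘ₀ne : Θ₀.Nonempty := ⟨θs, (hmemΘ₀ θs).mpr ⟨hθsS, hθsmin'⟩⟩
  have hΘ₀sub : Θ₀ ⊆ S := fun θ hθ => ((hmemΘ₀ θ).mp hθ).1
  have hFΘ₀ : ∀ θ ∈ Θ₀, F θ = L := fun θ hθ =>
    le_antisymm (((hmemΘ₀ θ).mp hθ).2 θs hθsS) (hθsmin' θ (hΘ₀sub hθ))
  -- bound for D
  have hDbound : ∀ θ, |D θ| ≤ (K:ℝ) * M ^ 2 := by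
    intro θ
    refine aux_abs_integral_le ν _ ?_ _ ?_
    · exact Finset.measurable_sum _ fun k _ => (hφmeas k (θ k)).mul (hhmeas k (θ k))
    · intro x
      calc |∑ k, φ k x (θ k) * h k x (θ k)| ≤ ∑ k, |φ k x (θ k) * h k x (θ k)| :=
            Finset.abs_sum_le_sum_abs _ _
        _ ≤ ∑ _k : Fin K, M ^ 2 := by
            refine Finset.sum_le_sum fun k _ => ?_
            rw [abs_mul, sq]
            exact mul_le_mul (hMφ k x (θ k)) (hMh k x (θ k)) (abs_nonneg _) hM0.le
        _ = (K:ℝ) * M ^ 2 := by simp [mul_comm]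
  set I : ℝ := sInf (D '' Θ₀) with hIdef
  have hDbdd : BddBelow (D '' Θ₀) := by
    refine ⟨-((K:ℝ) * M ^ 2), ?_⟩
    rintro z ⟨θ, _, rfl⟩
    have := hDbound θ
    rw [abs_le] at this
    exact this.1
  have hIle : ∀ θ ∈ Θ₀, I ≤ D θ := fun θ hθ => csInf_le hDbdd ⟨θ, hθ, rfl⟩
  -- key claim: near-minimizers of F have D-value near-at-least I
  have claim : ∀ ε' > (0:ℝ), ∃ η > (0:ℝ), ∀ θ ∈ S, F θ ≤ L + η → I - ε' ≤ D θ := by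
    intro ε' hε'
    set A := S ∩ D ⁻¹' Set.Iic (I - ε') with hA
    have hAclosed : IsClosed A := hDcont.preimage_isClosed_of_isClosed hSclosed isClosed_Iic
    have hAcomp : IsCompact A := hScomp.of_isClosed_subset hAclosed Set.inter_subset_left
    rcases Set.eq_empty_or_nonempty A with hAe | hAne
    · refine ⟨1, one_pos, fun θ hθ _ => ?_⟩
      by_contra hcon
      push_neg at hcon
      have : θ ∈ A := ⟨hθ, le_of_lt hcon⟩
      rw [hAe] at this
      exact this
    · obtain ⟨θa, hθaA, hθamin⟩ :=
        hAcomp.exists_isMinOn hAne (hFcont.mono Set.inter_subset_left)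
      have hLle : L ≤ F θa := hθsmin' θa hθaA.1
      have hFa : L < F θa := by
        rcases hLle.lt_or_eq with hlt | heq
        · exact hlt
        · exfalso
          have hθaΘ₀ : θa ∈ Θ₀ := (hmemΘ₀ θa).mpr ⟨hθaA.1, fun ϑ hϑ => heq ▸ hθsmin' ϑ hϑ⟩
          have h1 := hIle θa hθaΘ₀
          have h2 : D θa ≤ I - ε' := hθaA.2
          linarith
      refine ⟨(F θa - L) / 2, by linarith, fun θ hθ hFθ => ?_⟩
      by_contra hcon
      push_neg at hcon
      have hθA : θ ∈ A := ⟨hθ, le_of_lt hcon⟩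
      have := isMinOn_iff.mp hθamin θ hθA
      linarith
  have hK1 : (1:ℝ) ≤ (K:ℝ) := by exact_mod_cast hK
  have hKpos : (0:ℝ) < (K:ℝ) := lt_of_lt_of_le one_pos hK1
  -- more integrability facts
  have intφh : ∀ θ : ∀ k : Fin K, EuclideanSpace ℝ (Fin (dk k)),
      Integrable (fun x => ∑ k, φ k x (θ k) * h k x (θ k)) ν := by
    intro θ
    refine intsum _ (fun k => (hφmeas k (θ k)).mul (hhmeas k (θ k))) fun k => ⟨M * M, fun x => ?_⟩
    rw [abs_mul]
    exact mul_le_mul (hMφ k x (θ k)) (hMh k x (θ k)) (abs_nonneg _) hM0.le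
  have intφhn : ∀ n, ∀ θ : ∀ k : Fin K, EuclideanSpace ℝ (Fin (dk k)),
      Integrable (fun x => ∑ k, φ k x (θ k) * hn n k x (θ k)) ν := by
    intro n θ
    obtain ⟨Mn, hMn⟩ := hnb n
    refine intsum _ (fun k => (hφmeas k (θ k)).mul (hnmeas n k (θ k)))
      fun k => ⟨M * |Mn|, fun x => ?_⟩
    rw [abs_mul]
    exact mul_le_mul (hMφ k x (θ k)) (le_trans (hMn k x (θ k)) (le_abs_self _))
      (abs_nonneg _) hM0.le
  have inthn2 : ∀ n, ∀ θ : ∀ k : Fin K, EuclideanSpace ℝ (Fin (dk k)),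
      Integrable (fun x => ∑ k, (hn n k x (θ k)) ^ 2) ν := by
    intro n θ
    obtain ⟨Mn, hMn⟩ := hnb n
    refine intsum _ (fun k => (hnmeas n k (θ k)).pow_const 2) fun k => ⟨|Mn| ^ 2, fun x => ?_⟩
    rw [abs_of_nonneg (sq_nonneg _)]
    have h1 : |hn n k x (θ k)| ≤ |Mn| := le_trans (hMn k x (θ k)) (le_abs_self _)
    nlinarith [abs_nonneg (hn n k x (θ k)), sq_abs (hn n k x (θ k))]
  have intφ2sum : ∀ θ : ∀ k : Fin K, EuclideanSpace ℝ (Fin (dk k)),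
      Integrable (fun x => ∑ k, (φ k x (θ k)) ^ 2) ν := fun θ =>
    integrable_finset_sum _ fun k _ => intφ2 k (θ k)
  refine ⟨hΘ₀ne, ?_⟩
  rw [hLinf, Metric.tendsto_atTop]
  intro ε hε
  set B : ℝ := 2 * (K:ℝ) * M * (M + 1) + (K:ℝ) * (M + 1) ^ 2 with hBdef
  have hBpos : 0 < B := by positivity
  obtain ⟨η, hη, hclaim⟩ := claim (ε / 8) (by positivity)
  set δ₁ : ℝ := min 1 (ε / (32 * (K:ℝ) * M + 1)) with hδ₁def
  have hδ₁pos : 0 < δ₁ := lt_min one_pos (by positivity)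
  have hδ₁le1 : δ₁ ≤ 1 := min_le_left _ _
  have h2KMδ₁ : 2 * (K:ℝ) * M * δ₁ ≤ ε / 16 := by
    have h1 : δ₁ ≤ ε / (32 * (K:ℝ) * M + 1) := min_le_right _ _
    have h2 : 2 * (K:ℝ) * M * δ₁ ≤ 2 * (K:ℝ) * M * (ε / (32 * (K:ℝ) * M + 1)) :=
      mul_le_mul_of_nonneg_left h1 (by positivity)
    have h3 : 2 * (K:ℝ) * M * (ε / (32 * (K:ℝ) * M + 1)) ≤ ε / 16 := by
      rw [mul_div_assoc', div_le_div_iff₀ (by positivity) (by norm_num)]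
      nlinarith [mul_pos hKpos hM0, mul_nonneg (mul_nonneg hKpos.le hM0.le) hε.le]
    linarith
  obtain ⟨N₁, hN₁⟩ := hnconv δ₁ hδ₁pos
  set δ₂ : ℝ := min 1 (min (η / (ε / 8 + 2 * B + 1)) (ε / (16 * (K:ℝ) * (M + 1) ^ 2))) with hδ₂def
  have hδ₂pos : 0 < δ₂ := lt_min one_pos (lt_min (by positivity) (by positivity))
  obtain ⟨N₂, hN₂⟩ := Metric.tendsto_atTop.mp ht0 δ₂ hδ₂pos
  refine ⟨max N₁ N₂, fun n hnN => ?_⟩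
  have hδn : ∀ k x θk, |hn n k x θk - h k x θk| ≤ δ₁ :=
    hN₁ n (le_trans (le_max_left _ _) hnN)
  have htp : 0 < t n := htpos n
  have htδ₂ : t n < δ₂ := by
    have := hN₂ n (le_trans (le_max_right _ _) hnN)
    rw [Real.dist_eq, sub_zero] at this
    exact lt_of_le_of_lt (le_abs_self _) this
  have htle1 : t n ≤ 1 := le_trans htδ₂.le (min_le_left _ _)
  have htη : t n ≤ η / (ε / 8 + 2 * B + 1) :=
    le_trans htδ₂.le (le_trans (min_le_right _ _) (min_le_left _ _))
  have htQ : t n ≤ ε / (16 * (K:ℝ) * (M + 1) ^ 2) :=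
    le_trans htδ₂.le (le_trans (min_le_right _ _) (min_le_right _ _))
  -- per-n functionals
  set G : (∀ k : Fin K, EuclideanSpace ℝ (Fin (dk k))) → ℝ :=
    fun θ => ∫ x, ∑ k, (φ k x (θ k) + t n * hn n k x (θ k)) ^ 2 ∂ν with hGdef
  set P : (∀ k : Fin K, EuclideanSpace ℝ (Fin (dk k))) → ℝ :=
    fun θ => ∫ x, ∑ k, φ k x (θ k) * hn n k x (θ k) ∂ν with hPdef
  set Q : (∀ k : Fin K, EuclideanSpace ℝ (Fin (dk k))) → ℝ :=
    fun θ => ∫ x, ∑ k, (hn n k x (θ k)) ^ 2 ∂ν with hQdef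
  have hGexp : ∀ θ, G θ = F θ + (2 * t n) * P θ + (t n) ^ 2 * Q θ := by
    intro θ
    simp only [hGdef, hFdef, hPdef, hQdef]
    have key : ∀ x : ℝ, (∑ k, (φ k x (θ k) + t n * hn n k x (θ k)) ^ 2)
        = (∑ k, (φ k x (θ k)) ^ 2) + ((2 * t n) * ∑ k, φ k x (θ k) * hn n k x (θ k)
          + (t n) ^ 2 * ∑ k, (hn n k x (θ k)) ^ 2) := by
      intro x
      rw [Finset.mul_sum, Finset.mul_sum, ← Finset.sum_add_distrib, ← Finset.sum_add_distrib]
      exact Finset.sum_congr rfl fun k _ => by ring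
    simp_rw [key]
    have I1 : Integrable (fun x => (2 * t n) * ∑ k, φ k x (θ k) * hn n k x (θ k)) ν :=
      (intφhn n θ).const_mul _
    have I2 : Integrable (fun x => (t n) ^ 2 * ∑ k, (hn n k x (θ k)) ^ 2) ν :=
      (inthn2 n θ).const_mul _
    have I12 : Integrable (fun x => (2 * t n) * (∑ k, φ k x (θ k) * hn n k x (θ k))
        + (t n) ^ 2 * ∑ k, (hn n k x (θ k)) ^ 2) ν := I1.add I2
    rw [integral_add (intφ2sum θ) I12, integral_add I1 I2, integral_const_mul, integral_const_mul]
    ring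
  -- bounds on P and Q
  have hPD : ∀ θ, |P θ - D θ| ≤ (K:ℝ) * M * δ₁ := by
    intro θ
    have hsub : P θ - D θ = ∫ x, ∑ k, (φ k x (θ k) * hn n k x (θ k)
        - φ k x (θ k) * h k x (θ k)) ∂ν := by
      simp only [hPdef, hDdef]
      rw [← integral_sub (intφhn n θ) (intφh θ)]
      congr 1
      funext x
      rw [← Finset.sum_sub_distrib]
    rw [hsub]
    refine aux_abs_integral_le ν _ ?_ _ ?_
    · exact Finset.measurable_sum _ fun k _ =>
        ((hφmeas k (θ k)).mul (hnmeas n k (θ k))).sub ((hφmeas k (θ k)).mul (hhmeas k (θ k)))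
    · intro x
      calc |∑ k, (φ k x (θ k) * hn n k x (θ k) - φ k x (θ k) * h k x (θ k))|
          ≤ ∑ k, |φ k x (θ k) * hn n k x (θ k) - φ k x (θ k) * h k x (θ k)| :=
            Finset.abs_sum_le_sum_abs _ _
        _ ≤ ∑ _k : Fin K, M * δ₁ := by
            refine Finset.sum_le_sum fun k _ => ?_
            rw [← mul_sub, abs_mul]
            exact mul_le_mul (hMφ k x (θ k)) (hδn k x (θ k)) (abs_nonneg _) hM0.le
        _ = (K:ℝ) * (M * δ₁) := by simp [mul_comm]
        _ = (K:ℝ) * M * δ₁ := by ring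
  have hQb : ∀ θ, |Q θ| ≤ (K:ℝ) * (M + 1) ^ 2 := by
    intro θ
    refine aux_abs_integral_le ν _ ?_ _ ?_
    · exact Finset.measurable_sum _ fun k _ => (hnmeas n k (θ k)).pow_const 2
    · intro x
      calc |∑ k, (hn n k x (θ k)) ^ 2| ≤ ∑ k, |(hn n k x (θ k)) ^ 2| :=
            Finset.abs_sum_le_sum_abs _ _
        _ ≤ ∑ _k : Fin K, (M + 1) ^ 2 := by
            refine Finset.sum_le_sum fun k _ => ?_
            rw [abs_of_nonneg (sq_nonneg _)]
            have h1 : |hn n k x (θ k)| ≤ M + 1 := by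
              have h2 := hδn k x (θ k)
              have h3 := hMh k x (θ k)
              calc |hn n k x (θ k)| = |h k x (θ k) + (hn n k x (θ k) - h k x (θ k))| := by
                    ring_nf
                _ ≤ |h k x (θ k)| + |hn n k x (θ k) - h k x (θ k)| := abs_add_le _ _
                _ ≤ M + 1 := by linarith
            nlinarith [abs_nonneg (hn n k x (θ k)), sq_abs (hn n k x (θ k))]
        _ = (K:ℝ) * (M + 1) ^ 2 := by simp [mul_comm]
  have hPb : ∀ θ, |P θ| ≤ (K:ℝ) * (M * (M + 1)) := by
    intro θ
    refine aux_abs_integral_le ν _ ?_ _ ?_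
    · exact Finset.measurable_sum _ fun k _ => (hφmeas k (θ k)).mul (hnmeas n k (θ k))
    · intro x
      calc |∑ k, φ k x (θ k) * hn n k x (θ k)| ≤ ∑ k, |φ k x (θ k) * hn n k x (θ k)| :=
            Finset.abs_sum_le_sum_abs _ _
        _ ≤ ∑ _k : Fin K, M * (M + 1) := by
            refine Finset.sum_le_sum fun k _ => ?_
            rw [abs_mul]
            refine mul_le_mul (hMφ k x (θ k)) ?_ (abs_nonneg _) hM0.le
            have h2 := hδn k x (θ k)
            have h3 := hMh k x (θ k)
            calc |hn n k x (θ k)| = |h k x (θ k) + (hn n k x (θ k) - h k x (θ k))| := by ring_nf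
              _ ≤ |h k x (θ k)| + |hn n k x (θ k) - h k x (θ k)| := abs_add_le _ _
              _ ≤ M + 1 := by linarith
        _ = (K:ℝ) * (M * (M + 1)) := by simp [mul_comm]
  have hGF : ∀ θ, |G θ - F θ| ≤ t n * B := by
    intro θ
    have h1 := hPb θ
    have h2 := hQb θ
    have e : G θ - F θ = (2 * t n) * P θ + (t n) ^ 2 * Q θ := by rw [hGexp θ]; ring
    have ht2 : (t n) ^ 2 ≤ t n := by nlinarith [htp.le, htle1]
    rw [e]
    calc |(2 * t n) * P θ + (t n) ^ 2 * Q θ| ≤ |(2 * t n) * P θ| + |(t n) ^ 2 * Q θ| :=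
          abs_add_le _ _
      _ = 2 * t n * |P θ| + (t n) ^ 2 * |Q θ| := by
          have e1 : |(2 * t n) * P θ| = 2 * t n * |P θ| := by
            rw [abs_mul, abs_of_nonneg (by linarith : (0:ℝ) ≤ 2 * t n)]
          have e2 : |(t n) ^ 2 * Q θ| = (t n) ^ 2 * |Q θ| := by
            rw [abs_mul, abs_of_nonneg (sq_nonneg (t n))]
          rw [e1, e2]
      _ ≤ 2 * t n * ((K:ℝ) * (M * (M + 1))) + (t n) ^ 2 * ((K:ℝ) * (M + 1) ^ 2) :=
          add_le_add (mul_le_mul_of_nonneg_left h1 (by linarith))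
            (mul_le_mul_of_nonneg_left h2 (sq_nonneg _))
      _ ≤ t n * B := by
          rw [hBdef]
          have h4 : (t n) ^ 2 * ((K:ℝ) * (M + 1) ^ 2) ≤ t n * ((K:ℝ) * (M + 1) ^ 2) :=
            mul_le_mul_of_nonneg_right ht2 (by positivity)
          nlinarith
  have hQ0 : ∀ θ, 0 ≤ Q θ := by
    intro θ
    simp only [hQdef]
    exact integral_nonneg fun x => Finset.sum_nonneg fun k _ => sq_nonneg _
  have hG0 : ∀ θ, 0 ≤ G θ := by
    intro θ
    simp only [hGdef]
    exact integral_nonneg fun x => Finset.sum_nonneg fun k _ => sq_nonneg _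
  have hGbdd : BddBelow (G '' S) := ⟨0, by rintro z ⟨θ, _, rfl⟩; exact hG0 θ⟩
  have hLnle : ∀ θ ∈ S, sInf (G '' S) ≤ G θ := fun θ hθ => csInf_le hGbdd ⟨θ, hθ, rfl⟩
  -- upper bound
  obtain ⟨z, hzmem, hzlt⟩ := exists_lt_of_csInf_lt (hΘ₀ne.image D)
    (show sInf (D '' Θ₀) < I + ε / 8 by rw [← hIdef]; linarith)
  obtain ⟨θu, hθu, rfl⟩ := hzmem
  have hupper : (sInf (G '' S) - L) / t n ≤ 2 * I + 3 * ε / 8 := by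
    have h1 : sInf (G '' S) - L ≤ t n * (2 * P θu + t n * Q θu) := by
      have h2 := hLnle θu (hΘ₀sub hθu)
      rw [hGexp θu, hFΘ₀ θu hθu] at h2
      nlinarith [sq_nonneg (t n)]
    rw [div_le_iff₀ htp]
    have h3 : 2 * P θu + t n * Q θu ≤ 2 * I + 3 * ε / 8 := by
      have h4 := hPD θu
      have h5 := hQb θu
      rw [abs_le] at h4 h5
      have h6 : t n * Q θu ≤ ε / 16 := by
        calc t n * Q θu ≤ t n * ((K:ℝ) * (M + 1) ^ 2) :=
              mul_le_mul_of_nonneg_left h5.2 htp.le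
          _ ≤ (ε / (16 * (K:ℝ) * (M + 1) ^ 2)) * ((K:ℝ) * (M + 1) ^ 2) :=
              mul_le_mul_of_nonneg_right htQ (by positivity)
          _ = ε / 16 := by field_simp
      linarith
    calc sInf (G '' S) - L ≤ t n * (2 * P θu + t n * Q θu) := h1
      _ ≤ (2 * I + 3 * ε / 8) * t n := by
          rw [mul_comm]
          exact mul_le_mul_of_nonneg_right h3 htp.le
  -- lower bound
  obtain ⟨z, hzmem, hzlt'⟩ := exists_lt_of_csInf_lt (hSne.image G)
    (show sInf (G '' S) < sInf (G '' S) + t n * (ε / 8) by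
      have : 0 < t n * (ε / 8) := mul_pos htp (by positivity)
      linarith)
  obtain ⟨θl, hθl, rfl⟩ := hzmem
  have hFθl : F θl ≤ L + η := by
    have h1 := hGF θl
    have h2 := hGF θs
    rw [abs_le] at h1 h2
    have h3 : sInf (G '' S) ≤ G θs := hLnle θs hθsS
    have h4 : t n * (ε / 8 + 2 * B) ≤ η := by
      have hc : (0:ℝ) < ε / 8 + 2 * B + 1 := by positivity
      calc t n * (ε / 8 + 2 * B) ≤ (η / (ε / 8 + 2 * B + 1)) * (ε / 8 + 2 * B) :=
            mul_le_mul_of_nonneg_right htη (by positivity)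
        _ ≤ η := by
            rw [div_mul_eq_mul_div, div_le_iff₀ hc]
            nlinarith
    have h4' : t n * (ε / 8) + 2 * (t n * B) ≤ η := by
      have : t n * (ε / 8 + 2 * B) = t n * (ε / 8) + 2 * (t n * B) := by ring
      linarith [h4, this.ge]
    have hA : F θl ≤ G θl + t n * B := by linarith [h1.1]
    have hB2 : G θs ≤ F θs + t n * B := by linarith [h2.2]
    refine le_of_lt ?_
    calc F θl ≤ G θl + t n * B := hA
      _ < sInf (G '' S) + t n * (ε / 8) + t n * B := by linarith [hzlt']
      _ ≤ G θs + t n * (ε / 8) + t n * B := by linarith [h3]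
      _ ≤ F θs + t n * B + t n * (ε / 8) + t n * B :=
          add_le_add_left (add_le_add_left hB2 _) _
      _ = L + (t n * (ε / 8) + 2 * (t n * B)) := by rw [hLdef]; ring
      _ ≤ L + η := by linarith [h4']
  have hDθl : I - ε / 8 ≤ D θl := hclaim θl hθl hFθl
  have hlower : 2 * I - ε / 2 ≤ (sInf (G '' S) - L) / t n := by
    have h1 : t n * (2 * P θl + t n * Q θl - ε / 8) ≤ sInf (G '' S) - L := by
      have h2 : L ≤ F θl := hθsmin' θl hθl
      have h3 := hzlt'
      rw [hGexp θl] at h3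
      nlinarith [sq_nonneg (t n)]
    rw [le_div_iff₀ htp]
    have h4 : 2 * I - ε / 2 ≤ 2 * P θl + t n * Q θl - ε / 8 := by
      have h5 := hPD θl
      rw [abs_le] at h5
      have h6 : 0 ≤ t n * Q θl := mul_nonneg htp.le (hQ0 θl)
      linarith
    calc (2 * I - ε / 2) * t n = t n * (2 * I - ε / 2) := by ring
      _ ≤ t n * (2 * P θl + t n * Q θl - ε / 8) := mul_le_mul_of_nonneg_left h4 htp.le
      _ ≤ sInf (G '' S) - L := h1
  rw [Real.dist_eq, abs_lt]
  constructor <;> [linarith; linarith]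
end
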